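/- arXiv:2111.06724 — 3 statements merged into one kernel-verified Lean document; each statement's English description precedes it below -/
import Mathlib

section
/- Assume F ⊆ ℝ^p is nonempty compact and admits a (ν, ρ) separated structure, and let 0 < α < log ν / log ρ. Then there is a dense Gδ subset 𝒢 of C₁^α(F) such that every f ∈ 𝒢 satisfies λ(f(F)) = 0; consequently D_*(α, F) = 0. -/
open MeasureTheory
open scoped ENNReal NNReal

noncomputable section

/-- A nonempty set `F ⊆ ℝ^p` admits a `(ν, ρ)` separated structure: there are
`K > 0` and, for every `k`, a finite family `𝒮_k` of sets covering `F`, each of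
diameter `< K ν^k`, with distinct members at (inf) distance `> (1/K) ρ^k`. -/
def SepStructure {p : ℕ} (ν ρ : ℝ) (F : Set (EuclideanSpace ℝ (Fin p))) : Prop :=
  ∃ K : ℝ, 0 < K ∧ ∀ k : ℕ, ∃ S : Finset (Set (EuclideanSpace ℝ (Fin p))),
    (F ⊆ ⋃ A ∈ S, A) ∧
    (∀ A ∈ S, EMetric.diam A < ENNReal.ofReal (K * ν ^ k)) ∧
    (∀ A ∈ S, ∀ B ∈ S, A ≠ B →
      ENNReal.ofReal ((1 / K) * ρ ^ k) < ⨅ x ∈ A, EMetric.infEdist x B)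

/-- `C₁^α(F)`: the set of 1-Hölder-α functions `F → ℝ`, as a subset of the bounded
continuous functions on `F` (which carry the supremum metric). -/
def HolderBall (α : ℝ) {p : ℕ} (F : Set (EuclideanSpace ℝ (Fin p))) :
    Set (BoundedContinuousFunction ↥F ℝ) :=
  {f | ∀ x y : ↥F,
    |f x - f y| ≤ dist (x : EuclideanSpace ℝ (Fin p)) (y : EuclideanSpace ℝ (Fin p)) ^ α}

/-- `D_*^f(F) = sup {d : λ{r : dim_H (f⁻¹(r)) ≥ d} > 0}`. -/
def DstarF {p : ℕ} (F : Set (EuclideanSpace ℝ (Fin p))) (f : ↥F → ℝ) : ℝ :=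
  sSup {d : ℝ | 0 < volume {r : ℝ | ENNReal.ofReal d ≤ dimH (Subtype.val '' (f ⁻¹' {r}))}}

/-- `D_*(α, F)`: the supremum over all dense Gδ subsets `G` of `C₁^α(F)` of
`inf {D_*^f(F) : f ∈ G}`. -/
def DStar {p : ℕ} (α : ℝ) (F : Set (EuclideanSpace ℝ (Fin p))) : ℝ :=
  sSup {d : ℝ | ∃ G : Set ↥(HolderBall α F), Dense G ∧ IsGδ G ∧
    d = sInf ((fun g : ↥(HolderBall α F) =>
      DstarF F ⇑(g : BoundedContinuousFunction ↥F ℝ)) '' G)}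

/-! ### Auxiliary lemmas -/

private lemma real_rpow_subadd {q a b : ℝ} (hq : 0 ≤ q) (hq1 : q ≤ 1)
    (ha : 0 ≤ a) (hb : 0 ≤ b) : (a + b) ^ q ≤ a ^ q + b ^ q := by
  have h := NNReal.rpow_add_le_add_rpow a.toNNReal b.toNNReal hq hq1
  have h2 : (((a.toNNReal + b.toNNReal) ^ q : NNReal) : ℝ) ≤
      ((a.toNNReal ^ q + b.toNNReal ^ q : NNReal) : ℝ) := by exact_mod_cast h
  rwa [NNReal.coe_rpow, NNReal.coe_add, NNReal.coe_add, NNReal.coe_rpow, NNReal.coe_rpow,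
    Real.coe_toNNReal _ ha, Real.coe_toNNReal _ hb] at h2

private lemma rpow_concave_helper {t q a b : ℝ} (hq1 : q ≤ 1)
    (ha : 0 ≤ a) (hb : 0 < b) (hbt : b ^ q ≤ t * b) : (a + b) ^ q ≤ t * a + b ^ q := by
  have h2 : (0:ℝ) ≤ 1 + a / b := by positivity
  have h1 : a + b = b * (1 + a / b) := by field_simp; ring
  have h3 : (a + b) ^ q = b ^ q * (1 + a / b) ^ q := by
    rw [h1, Real.mul_rpow hb.le h2]
  have h4 : (1 + a / b) ^ q ≤ 1 + a / b := by
    calc (1 + a / b) ^ q ≤ (1 + a / b) ^ (1:ℝ) :=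
          Real.rpow_le_rpow_of_exponent_le (by linarith [div_nonneg ha hb.le]) hq1
      _ = 1 + a / b := Real.rpow_one _
  have h5 : b ^ q * (1 + a / b) ^ q ≤ b ^ q * (1 + a / b) :=
    mul_le_mul_of_nonneg_left h4 (Real.rpow_nonneg hb.le _)
  have h6 : b ^ q * (1 + a / b) = b ^ q + a * (b ^ q / b) := by field_simp
  have h7 : b ^ q / b ≤ t := by rw [div_le_iff₀ hb]; linarith
  have h8 : a * (b ^ q / b) ≤ a * t := mul_le_mul_of_nonneg_left h7 ha
  rw [h3]
  calc b ^ q * (1 + a / b) ^ q ≤ b ^ q * (1 + a / b) := h5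
    _ = b ^ q + a * (b ^ q / b) := h6
    _ ≤ b ^ q + a * t := by linarith
    _ = t * a + b ^ q := by ring

private lemma min_subadd {t q a b : ℝ} (hq0 : 0 < q) (hq1 : q ≤ 1) (ht : 0 ≤ t)
    (ha : 0 ≤ a) (hb : 0 ≤ b) :
    min (t * (a + b)) ((a + b) ^ q) ≤ min (t * a) (a ^ q) + min (t * b) (b ^ q) := by
  rcases le_or_gt b 0 with hb0 | hb0
  · have hb' : b = 0 := le_antisymm hb0 hb
    subst hb'
    simp [Real.zero_rpow hq0.ne']
  rcases le_or_gt a 0 with ha0 | ha0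
  · have ha' : a = 0 := le_antisymm ha0 ha
    subst ha'
    simp [Real.zero_rpow hq0.ne']
  rcases le_total (t * a) (a ^ q) with h1 | h1 <;> rcases le_total (t * b) (b ^ q) with h2 | h2
  · rw [min_eq_left h1, min_eq_left h2]
    calc min (t * (a + b)) ((a + b) ^ q) ≤ t * (a + b) := min_le_left _ _
      _ = t * a + t * b := by ring
  · rw [min_eq_left h1, min_eq_right h2]
    calc min (t * (a + b)) ((a + b) ^ q) ≤ (a + b) ^ q := min_le_right _ _
      _ ≤ t * a + b ^ q := rpow_concave_helper hq1 ha hb0 h2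
  · rw [min_eq_right h1, min_eq_left h2]
    calc min (t * (a + b)) ((a + b) ^ q) ≤ (a + b) ^ q := min_le_right _ _
      _ = (b + a) ^ q := by rw [add_comm]
      _ ≤ t * b + a ^ q := rpow_concave_helper hq1 hb ha0 h1
      _ = a ^ q + t * b := by ring
  · rw [min_eq_right h1, min_eq_right h2]
    calc min (t * (a + b)) ((a + b) ^ q) ≤ (a + b) ^ q := min_le_right _ _
      _ ≤ a ^ q + b ^ q := real_rpow_subadd hq0.le hq1 ha hb

private lemma omega_lower {q eps u : ℝ} (hq0 : 0 < q) (hq1 : q ≤ 1) (heps : 0 < eps)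
    (hu : 0 ≤ u) : u ^ q - eps ≤ min ((eps ^ q⁻¹) ^ (q - 1) * u) (u ^ q) := by
  have hd1p : 0 < eps ^ q⁻¹ := Real.rpow_pos_of_pos heps _
  have htp : 0 < (eps ^ q⁻¹) ^ (q - 1) := Real.rpow_pos_of_pos hd1p _
  have hd1q : (eps ^ q⁻¹) ^ q = eps := by
    rw [← Real.rpow_mul heps.le, inv_mul_cancel₀ hq0.ne', Real.rpow_one]
  rcases le_total u (eps ^ q⁻¹) with h | h
  · have h1 : u ^ q ≤ eps := by
      rw [← hd1q]; exact Real.rpow_le_rpow hu h hq0.le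
    have hmin : 0 ≤ min ((eps ^ q⁻¹) ^ (q - 1) * u) (u ^ q) :=
      le_min (mul_nonneg htp.le hu) (Real.rpow_nonneg hu _)
    linarith
  · have hu0 : 0 < u := lt_of_lt_of_le hd1p h
    have h1 : u ^ (q - 1) ≤ (eps ^ q⁻¹) ^ (q - 1) :=
      Real.rpow_le_rpow_of_nonpos hd1p h (by linarith)
    have h2 : u ^ q = u ^ (q - 1) * u := by
      have h2' : u ^ (q - 1 + 1) = u ^ (q - 1) * u ^ (1:ℝ) := Real.rpow_add hu0 _ _
      rw [Real.rpow_one, sub_add_cancel] at h2'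
      exact h2'
    have h3 : u ^ q ≤ (eps ^ q⁻¹) ^ (q - 1) * u := by
      rw [h2]; exact mul_le_mul_of_nonneg_right h1 hu0.le
    exact le_min (by linarith) (by linarith)

private lemma pow_rpow_comm {x : ℝ} (hx : 0 ≤ x) (q : ℝ) (k : ℕ) :
    (x ^ k) ^ q = (x ^ q) ^ k := by
  rw [← Real.rpow_natCast x k, ← Real.rpow_mul hx, mul_comm, Real.rpow_mul hx,
    Real.rpow_natCast]

set_option maxHeartbeats 1000000 in
/-- The key approximation lemma: every 1-Hölder-α function on `F` can be approximated,
in the sup metric, by a 1-Hölder-α function with finite range. -/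
private lemma key_approx {p : ℕ} {F : Set (EuclideanSpace ℝ (Fin p))}
    (hFne : F.Nonempty) (hFc : IsCompact F)
    {ν ρ : ℝ} (hν0 : 0 < ν) (hν1 : ν < 1) (hρ0 : 0 < ρ) (hρ1 : ρ < 1)
    (hsep : SepStructure ν ρ F)
    {α : ℝ} (hα0 : 0 < α) (hα1 : α < Real.log ν / Real.log ρ)
    (f : BoundedContinuousFunction ↥F ℝ) (hf : f ∈ HolderBall α F)
    {ε : ℝ} (hε : 0 < ε) :
    ∃ g ∈ HolderBall α F, dist f g ≤ ε ∧ (Set.range ⇑g).Finite := by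
  classical
  obtain ⟨K, hK, hS⟩ := hsep
  haveI : Nonempty ↥F := hFne.to_subtype
  set D := Metric.diam F with hDdef
  -- Assembly: given a level k and a function L satisfying a cross-piece Hölder-type
  -- bound and a closeness bound, the piecewise-constant function built from L works.
  have assemble : ∀ (k : ℕ) (L : ↥F → ℝ),
      (∀ a b : ↥F, ∀ r : ℝ, (1 / K) * ρ ^ k ≤ r →
        dist (a : EuclideanSpace ℝ (Fin p)) (b : EuclideanSpace ℝ (Fin p)) ≤ r + 2 * (K * ν ^ k) →
        |L a - L b| ≤ r ^ α) →
      (∀ a b : ↥F, dist (a : EuclideanSpace ℝ (Fin p)) (b : EuclideanSpace ℝ (Fin p)) ≤ K * ν ^ k →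
        |L b - f a| ≤ ε) →
      ∃ g ∈ HolderBall α F, dist f g ≤ ε ∧ (Set.range ⇑g).Finite := by
    intro k L hH hC
    obtain ⟨S, hcov, hdiam, hsepk⟩ := hS k
    have hx : ∀ x : ↥F, ∃ A, A ∈ S ∧ (x : EuclideanSpace ℝ (Fin p)) ∈ A := by
      intro x
      have := hcov x.2
      simpa using this
    choose P hPS hPmem using hx
    set φ : Set (EuclideanSpace ℝ (Fin p)) → ↥F := fun A =>
      if h : ∃ z : ↥F, (z : EuclideanSpace ℝ (Fin p)) ∈ A then h.choose
      else Classical.arbitrary ↥F with hφdef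
    have hφmem : ∀ x : ↥F, ((φ (P x)) : EuclideanSpace ℝ (Fin p)) ∈ P x := by
      intro x
      have h : ∃ z : ↥F, (z : EuclideanSpace ℝ (Fin p)) ∈ P x := ⟨x, hPmem x⟩
      simp only [hφdef, dif_pos h]
      exact h.choose_spec
    set g0 : ↥F → ℝ := fun x => L (φ (P x)) with hg0def
    have hdist_rep : ∀ x : ↥F,
        dist (x : EuclideanSpace ℝ (Fin p)) ((φ (P x)) : EuclideanSpace ℝ (Fin p)) ≤ K * ν ^ k := by
      intro x
      have h1 : edist (x : EuclideanSpace ℝ (Fin p)) ((φ (P x)) : EuclideanSpace ℝ (Fin p)) ≤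
          EMetric.diam (P x) := EMetric.edist_le_diam_of_mem (hPmem x) (hφmem x)
      have h2 := h1.trans_lt (hdiam _ (hPS x))
      exact (edist_lt_ofReal.1 h2).le
    have hsep' : ∀ x y : ↥F, P x ≠ P y →
        (1 / K) * ρ ^ k < dist (x : EuclideanSpace ℝ (Fin p)) (y : EuclideanSpace ℝ (Fin p)) := by
      intro x y hne
      have h := hsepk (P x) (hPS x) (P y) (hPS y) hne
      have h2 : (⨅ a ∈ P x, EMetric.infEdist a (P y)) ≤
          edist (x : EuclideanSpace ℝ (Fin p)) (y : EuclideanSpace ℝ (Fin p)) := by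
        refine le_trans (iInf₂_le (x : EuclideanSpace ℝ (Fin p)) (hPmem x)) ?_
        exact EMetric.infEdist_le_edist_of_mem (hPmem y)
      have h3 : ENNReal.ofReal ((1 / K) * ρ ^ k) <
          edist (x : EuclideanSpace ℝ (Fin p)) (y : EuclideanSpace ℝ (Fin p)) := lt_of_lt_of_le h h2
      rw [edist_dist] at h3
      exact (ENNReal.ofReal_lt_ofReal_iff_of_nonneg (by positivity)).1 h3
    have hHol : ∀ x y : ↥F, |g0 x - g0 y| ≤
        dist (x : EuclideanSpace ℝ (Fin p)) (y : EuclideanSpace ℝ (Fin p)) ^ α := by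
      intro x y
      by_cases hPP : P x = P y
      · have hxy : g0 x = g0 y := by simp only [hg0def, hPP]
        rw [hxy, sub_self, abs_zero]
        exact Real.rpow_nonneg dist_nonneg _
      · have hr := hsep' x y hPP
        have hd : dist ((φ (P x)) : EuclideanSpace ℝ (Fin p)) ((φ (P y)) : EuclideanSpace ℝ (Fin p)) ≤
            dist (x : EuclideanSpace ℝ (Fin p)) (y : EuclideanSpace ℝ (Fin p)) + 2 * (K * ν ^ k) := by
          have t4 := dist_triangle4 ((φ (P x)) : EuclideanSpace ℝ (Fin p))
            (x : EuclideanSpace ℝ (Fin p)) (y : EuclideanSpace ℝ (Fin p))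
            ((φ (P y)) : EuclideanSpace ℝ (Fin p))
          have h1 := hdist_rep x
          have h2 := hdist_rep y
          rw [dist_comm ((φ (P x)) : EuclideanSpace ℝ (Fin p)) (x : EuclideanSpace ℝ (Fin p))] at t4
          linarith
        exact hH (φ (P x)) (φ (P y)) _ hr.le hd
    have hloc : ∀ x y : ↥F,
        dist (x : EuclideanSpace ℝ (Fin p)) (y : EuclideanSpace ℝ (Fin p)) ≤ (1 / K) * ρ ^ k →
        g0 x = g0 y := by
      intro x y h
      by_cases hPP : P x = P y
      · simp only [hg0def, hPP]
      · exact absurd h (not_le.2 (hsep' x y hPP))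
    have hcont : Continuous g0 := by
      rw [Metric.continuous_iff]
      intro x ε' hε'
      refine ⟨(1 / K) * ρ ^ k, by positivity, fun y hy => ?_⟩
      have : g0 y = g0 x := by
        refine hloc y x ?_
        rw [← Subtype.dist_eq]
        exact hy.le
      rw [this]
      simpa using hε'
    have hbnd : ∀ x y : ↥F, dist (g0 x) (g0 y) ≤ D ^ α := by
      intro x y
      have h1 : dist (x : EuclideanSpace ℝ (Fin p)) (y : EuclideanSpace ℝ (Fin p)) ≤ D :=
        Metric.dist_le_diam_of_mem hFc.isBounded x.2 y.2
      have h2 : dist (x : EuclideanSpace ℝ (Fin p)) (y : EuclideanSpace ℝ (Fin p)) ^ α ≤ D ^ α :=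
        Real.rpow_le_rpow dist_nonneg h1 hα0.le
      calc dist (g0 x) (g0 y) = |g0 x - g0 y| := Real.dist_eq _ _
        _ ≤ _ := le_trans (hHol x y) h2
    set g : BoundedContinuousFunction ↥F ℝ := ⟨⟨g0, hcont⟩, D ^ α, hbnd⟩ with hgdef
    have hgcoe : ⇑g = g0 := rfl
    refine ⟨g, ?_, ?_, ?_⟩
    · intro x y
      rw [hgcoe]
      exact hHol x y
    · rw [BoundedContinuousFunction.dist_le hε.le]
      intro x
      have := hC x (φ (P x)) (hdist_rep x)
      rw [Real.dist_eq, hgcoe]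
      calc |f x - g0 x| = |g0 x - f x| := abs_sub_comm _ _
        _ ≤ ε := this
    · rw [hgcoe]
      have hsub : Set.range g0 ⊆ (fun A => L (φ A)) '' (S : Set (Set (EuclideanSpace ℝ (Fin p)))) := by
        rintro _ ⟨x, rfl⟩
        exact ⟨P x, hPS x, rfl⟩
      exact (S.finite_toSet.image _).subset hsub
  -- Now the two cases.
  rcases lt_or_ge ν ρ with hνρ | hρν
  · -- naive scaling works since gaps dominate diameters
    obtain ⟨δ, hδ0, hδhalf, hδ1⟩ : ∃ δ : ℝ, 0 < δ ∧ δ ≤ 1 / 2 ∧ δ ≤ ε / (2 * (‖f‖ + 1)) :=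
      ⟨min (ε / (2 * (‖f‖ + 1))) (1 / 2), lt_min (by positivity) one_half_pos,
        min_le_right _ _, min_le_left _ _⟩
    have h1δ : (0:ℝ) < 1 - δ := by linarith
    obtain ⟨τ, hτ0, hτα⟩ : ∃ τ : ℝ, 0 < τ ∧ (1 + τ) ^ α = (1 - δ)⁻¹ := by
      refine ⟨(1 - δ)⁻¹ ^ α⁻¹ - 1, ?_, ?_⟩
      · have hinv1 : 1 < (1 - δ)⁻¹ := by
          have hp : 0 < (1 - δ)⁻¹ := by positivity
          nlinarith [mul_inv_cancel₀ (ne_of_gt h1δ)]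
        have h1 : 1 < (1 - δ)⁻¹ ^ α⁻¹ :=
          (Real.one_lt_rpow_iff_of_pos (by positivity)).2 (Or.inl ⟨hinv1, by positivity⟩)
        linarith
      · rw [add_sub_cancel, ← Real.rpow_mul (by positivity), inv_mul_cancel₀ hα0.ne',
          Real.rpow_one]
    have hev1 : ∀ᶠ k : ℕ in Filter.atTop, 2 * (K * ν ^ k) ≤ τ * ((1 / K) * ρ ^ k) := by
      have hc0 : 0 < τ * (1 / K) / (2 * K) := by positivity
      have hlim := tendsto_pow_atTop_nhds_zero_of_lt_one
        (le_of_lt (by positivity : (0:ℝ) < ν / ρ)) ((div_lt_one hρ0).2 hνρ)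
      filter_upwards [hlim.eventually (gt_mem_nhds hc0)] with k hk
      have hρk : (0:ℝ) < ρ ^ k := by positivity
      have hν_eq : ν ^ k = (ν / ρ) ^ k * ρ ^ k := by
        rw [div_pow, div_mul_cancel₀]
        exact ne_of_gt hρk
      have h2 : (ν / ρ) ^ k * ρ ^ k ≤ (τ * (1 / K) / (2 * K)) * ρ ^ k :=
        mul_le_mul_of_nonneg_right hk.le hρk.le
      rw [hν_eq]
      calc 2 * (K * ((ν / ρ) ^ k * ρ ^ k)) = (2 * K) * ((ν / ρ) ^ k * ρ ^ k) := by ring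
        _ ≤ (2 * K) * ((τ * (1 / K) / (2 * K)) * ρ ^ k) :=
            mul_le_mul_of_nonneg_left h2 (by positivity)
        _ = τ * ((1 / K) * ρ ^ k) := by field_simp
    have hev2 : ∀ᶠ k : ℕ in Filter.atTop, (K * ν ^ k) ^ α ≤ ε / 2 := by
      have hKα : (0:ℝ) < K ^ α := Real.rpow_pos_of_pos hK _
      have hc0 : 0 < (ε / 2) / K ^ α := by positivity
      have hlim := tendsto_pow_atTop_nhds_zero_of_lt_one
        (Real.rpow_nonneg hν0.le α) (Real.rpow_lt_one hν0.le hν1 hα0)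
      filter_upwards [hlim.eventually (gt_mem_nhds hc0)] with k hk
      rw [Real.mul_rpow hK.le (by positivity), pow_rpow_comm hν0.le α k]
      calc K ^ α * (ν ^ α) ^ k ≤ K ^ α * ((ε / 2) / K ^ α) :=
            mul_le_mul_of_nonneg_left hk.le hKα.le
        _ = ε / 2 := by field_simp; try ring
    obtain ⟨k, hk1, hk2⟩ := (hev1.and hev2).exists
    refine assemble k (fun x => (1 - δ) * f x) ?_ ?_
    · intro a b r hr hd
      have hd00 : (0:ℝ) < (1 / K) * ρ ^ k := by positivity
      have hr0 : 0 < r := lt_of_lt_of_le hd00 hr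
      have hτr : τ * ((1 / K) * ρ ^ k) ≤ τ * r := mul_le_mul_of_nonneg_left hr hτ0.le
      have hdab : dist (a : EuclideanSpace ℝ (Fin p)) (b : EuclideanSpace ℝ (Fin p)) ≤
          (1 + τ) * r := by nlinarith [hk1, hτr, hd]
      have h1 : |f a - f b| ≤ ((1 + τ) * r) ^ α :=
        le_trans (hf a b) (Real.rpow_le_rpow dist_nonneg hdab hα0.le)
      have h2 : ((1 + τ) * r) ^ α = (1 - δ)⁻¹ * r ^ α := by
        rw [Real.mul_rpow (by linarith) hr0.le, hτα]
      have habs : |(1 - δ) * f a - (1 - δ) * f b| = (1 - δ) * |f a - f b| := by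
        rw [← mul_sub, abs_mul, abs_of_pos h1δ]
      rw [habs]
      calc (1 - δ) * |f a - f b| ≤ (1 - δ) * ((1 - δ)⁻¹ * r ^ α) := by
            rw [← h2]; exact mul_le_mul_of_nonneg_left h1 h1δ.le
        _ = r ^ α := by field_simp
    · intro a b hd
      have h1 : |f b - f a| ≤ (K * ν ^ k) ^ α := by
        refine le_trans (hf b a) (Real.rpow_le_rpow dist_nonneg ?_ hα0.le)
        rw [dist_comm]; exact hd
      have h2 : |f b| ≤ ‖f‖ := by
        simpa [Real.norm_eq_abs] using f.norm_coe_le_norm b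
      have hfnn : (0:ℝ) ≤ ‖f‖ := norm_nonneg f
      have h3 : δ * |f b| ≤ ε / 2 := by
        calc δ * |f b| ≤ (ε / (2 * (‖f‖ + 1))) * ‖f‖ :=
              mul_le_mul hδ1 h2 (abs_nonneg _) (by positivity)
          _ ≤ ε / 2 := by
              rw [div_mul_eq_mul_div, div_le_div_iff₀ (by positivity) (by positivity)]
              nlinarith
      have heq : (1 - δ) * f b - f a = (f b - f a) + -(δ * f b) := by ring
      calc |(1 - δ) * f b - f a| = |(f b - f a) + -(δ * f b)| := by rw [heq]
        _ ≤ |f b - f a| + |-(δ * f b)| := abs_add_le _ _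
        _ = |f b - f a| + δ * |f b| := by rw [abs_neg, abs_mul, abs_of_pos hδ0]
        _ ≤ (K * ν ^ k) ^ α + ε / 2 := by linarith
        _ ≤ ε := by linarith
  · -- inf-convolution case; here α ≤ 1
    have hlogρ : Real.log ρ < 0 := Real.log_neg hρ0 hρ1
    have hνρα : ν < ρ ^ α := by
      have h1 : Real.log ν < α * Real.log ρ := by
        have := (lt_div_iff_of_neg hlogρ).1 hα1
        linarith [this]
      calc ν = Real.exp (Real.log ν) := (Real.exp_log hν0).symm
        _ < Real.exp (Real.log ρ * α) := Real.exp_lt_exp.2 (by linarith [mul_comm α (Real.log ρ)])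
        _ = ρ ^ α := (Real.rpow_def_of_pos hρ0 α).symm
    have hαle1 : α ≤ 1 := by
      have hlep : Real.log ρ ≤ Real.log ν := (Real.log_le_log_iff hρ0 hν0).2 hρν
      have hβ1 : Real.log ν / Real.log ρ ≤ 1 := by
        rw [div_le_iff_of_neg hlogρ]; linarith
      linarith
    set c := ν / ρ ^ α with hcdef
    have hρα : (0:ℝ) < ρ ^ α := Real.rpow_pos_of_pos hρ0 α
    have hc0 : 0 < c := by positivity
    have hc1 : c < 1 := (div_lt_one hρα).2 hνρα
    have hε'0 : 0 < ε / 4 := by positivity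
    obtain ⟨t, ht0, htlow⟩ : ∃ t : ℝ, 0 < t ∧
        ∀ u, 0 ≤ u → u ^ α - ε / 4 ≤ min (t * u) (u ^ α) := by
      refine ⟨((ε / 4) ^ α⁻¹) ^ (α - 1), ?_, fun u hu => omega_lower hα0 hαle1 hε'0 hu⟩
      exact Real.rpow_pos_of_pos (Real.rpow_pos_of_pos hε'0 _) _
    have hfnn : (0:ℝ) ≤ ‖f‖ := norm_nonneg f
    obtain ⟨δ, hδ0, hδhalf, hδ1⟩ : ∃ δ : ℝ, 0 < δ ∧ δ ≤ 1 / 2 ∧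
        δ ≤ ε / (4 * (‖f‖ + ε / 4 + 1)) :=
      ⟨min (ε / (4 * (‖f‖ + ε / 4 + 1))) (1 / 2), lt_min (by positivity) one_half_pos,
        min_le_right _ _, min_le_left _ _⟩
    have h1δ : (0:ℝ) < 1 - δ := by linarith
    set ω : ℝ → ℝ := fun u => min (t * u) (u ^ α) with hωdef
    have hω_nonneg : ∀ u, 0 ≤ u → 0 ≤ ω u := fun u hu =>
      le_min (by positivity) (Real.rpow_nonneg hu _)
    have hω_zero : ω 0 = 0 := by
      simp [hωdef, Real.zero_rpow hα0.ne']
    have hω_mono : ∀ u v, 0 ≤ u → u ≤ v → ω u ≤ ω v := fun u v hu huv =>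
      min_le_min (by nlinarith) (Real.rpow_le_rpow hu huv hα0.le)
    have hω_lin : ∀ u, ω u ≤ t * u := fun u => min_le_left _ _
    have hω_rpow : ∀ u, ω u ≤ u ^ α := fun u => min_le_right _ _
    have hω_subadd : ∀ u v, 0 ≤ u → 0 ≤ v → ω (u + v) ≤ ω u + ω v := fun u v hu hv =>
      min_subadd hα0 hαle1 ht0.le hu hv
    have hω_lower : ∀ u, 0 ≤ u → u ^ α - ε / 4 ≤ ω u := htlow
    set M : ↥F → ℝ := fun a => ⨅ y : ↥F,
      (f y + ω (dist (a : EuclideanSpace ℝ (Fin p)) (y : EuclideanSpace ℝ (Fin p)))) with hMdef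
    have hbdd : ∀ a : ↥F, BddBelow (Set.range fun y : ↥F =>
        f y + ω (dist (a : EuclideanSpace ℝ (Fin p)) (y : EuclideanSpace ℝ (Fin p)))) := by
      intro a
      refine ⟨-‖f‖, ?_⟩
      rintro _ ⟨y, rfl⟩
      have h2 : |f y| ≤ ‖f‖ := by simpa [Real.norm_eq_abs] using f.norm_coe_le_norm y
      have h3 := hω_nonneg _ (dist_nonneg (x := (a : EuclideanSpace ℝ (Fin p)))
        (y := (y : EuclideanSpace ℝ (Fin p))))
      have h4 := (abs_le.1 h2).1
      simp only [Set.mem_setOf_eq]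
      linarith
    have hMle : ∀ a : ↥F, M a ≤ f a := by
      intro a
      have h := ciInf_le (hbdd a) a
      simp only [dist_self, hω_zero, add_zero] at h
      exact h
    have hMge : ∀ a : ↥F, f a - ε / 4 ≤ M a := by
      intro a
      refine le_ciInf fun y => ?_
      have h1 : f a - f y ≤
          dist (a : EuclideanSpace ℝ (Fin p)) (y : EuclideanSpace ℝ (Fin p)) ^ α :=
        le_trans (le_abs_self _) (hf a y)
      have h2 := hω_lower _ (dist_nonneg (x := (a : EuclideanSpace ℝ (Fin p)))
        (y := (y : EuclideanSpace ℝ (Fin p))))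
      linarith
    have hMone : ∀ a b : ↥F, M a ≤ M b +
        ω (dist (a : EuclideanSpace ℝ (Fin p)) (b : EuclideanSpace ℝ (Fin p))) := by
      intro a b
      have h1 : ∀ y : ↥F, M a -
          ω (dist (a : EuclideanSpace ℝ (Fin p)) (b : EuclideanSpace ℝ (Fin p))) ≤
          f y + ω (dist (b : EuclideanSpace ℝ (Fin p)) (y : EuclideanSpace ℝ (Fin p))) := by
        intro y
        have h2 : M a ≤ f y +
            ω (dist (a : EuclideanSpace ℝ (Fin p)) (y : EuclideanSpace ℝ (Fin p))) :=
          ciInf_le (hbdd a) y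
        have h3 : ω (dist (a : EuclideanSpace ℝ (Fin p)) (y : EuclideanSpace ℝ (Fin p))) ≤
            ω (dist (a : EuclideanSpace ℝ (Fin p)) (b : EuclideanSpace ℝ (Fin p)) +
              dist (b : EuclideanSpace ℝ (Fin p)) (y : EuclideanSpace ℝ (Fin p))) :=
          hω_mono _ _ dist_nonneg (dist_triangle _ _ _)
        have h4 := hω_subadd
          (dist (a : EuclideanSpace ℝ (Fin p)) (b : EuclideanSpace ℝ (Fin p)))
          (dist (b : EuclideanSpace ℝ (Fin p)) (y : EuclideanSpace ℝ (Fin p)))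
          dist_nonneg dist_nonneg
        linarith
      have h5 := le_ciInf h1
      have h6 : M a - ω (dist (a : EuclideanSpace ℝ (Fin p)) (b : EuclideanSpace ℝ (Fin p))) ≤
          M b := h5
      linarith
    have hMmod : ∀ a b : ↥F, |M a - M b| ≤
        ω (dist (a : EuclideanSpace ℝ (Fin p)) (b : EuclideanSpace ℝ (Fin p))) := by
      intro a b
      rw [abs_sub_le_iff]
      constructor
      · linarith [hMone a b]
      · have := hMone b a
        rw [dist_comm (b : EuclideanSpace ℝ (Fin p)) (a : EuclideanSpace ℝ (Fin p))] at this
        linarith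
    have hev1 : ∀ᶠ k : ℕ in Filter.atTop, t * (K * ν ^ k) ≤ ε / 4 := by
      have hc0' : 0 < (ε / 4) / (t * K) := by positivity
      have hlim := tendsto_pow_atTop_nhds_zero_of_lt_one hν0.le hν1
      filter_upwards [hlim.eventually (gt_mem_nhds hc0')] with k hk
      calc t * (K * ν ^ k) = (t * K) * ν ^ k := by ring
        _ ≤ (t * K) * ((ε / 4) / (t * K)) := mul_le_mul_of_nonneg_left hk.le (by positivity)
        _ = ε / 4 := by field_simp; try ring
    have hev2 : ∀ᶠ k : ℕ in Filter.atTop,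
        2 * (t * (K * ν ^ k)) ≤ δ * ((1 / K) * ρ ^ k) ^ α := by
      have hc0' : 0 < (δ * (1 / K) ^ α) / (2 * t * K) := by positivity
      have hlim := tendsto_pow_atTop_nhds_zero_of_lt_one hc0.le hc1
      filter_upwards [hlim.eventually (gt_mem_nhds hc0')] with k hk
      have hν_eq : ν ^ k = c ^ k * (ρ ^ α) ^ k := by
        rw [← mul_pow, hcdef, div_mul_cancel₀ _ (ne_of_gt hρα)]
      have hd0α : ((1 / K) * ρ ^ k) ^ α = (1 / K) ^ α * (ρ ^ α) ^ k := by
        rw [Real.mul_rpow (by positivity) (by positivity), pow_rpow_comm hρ0.le α k]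
      rw [hν_eq, hd0α]
      have hpos : (0:ℝ) < (ρ ^ α) ^ k := by positivity
      calc 2 * (t * (K * (c ^ k * (ρ ^ α) ^ k))) = ((2 * t * K) * c ^ k) * (ρ ^ α) ^ k := by ring
        _ ≤ ((2 * t * K) * ((δ * (1 / K) ^ α) / (2 * t * K))) * (ρ ^ α) ^ k := by
            refine mul_le_mul_of_nonneg_right ?_ hpos.le
            exact mul_le_mul_of_nonneg_left hk.le (by positivity)
        _ = δ * ((1 / K) ^ α * (ρ ^ α) ^ k) := by field_simp; try ring
    obtain ⟨k, hk1, hk2⟩ := (hev1.and hev2).exists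
    refine assemble k (fun x => (1 - δ) * M x) ?_ ?_
    · intro a b r hr hd
      have hd00 : (0:ℝ) < (1 / K) * ρ ^ k := by positivity
      have hr0 : 0 < r := lt_of_lt_of_le hd00 hr
      have h1 := hMmod a b
      have h2 : ω (dist (a : EuclideanSpace ℝ (Fin p)) (b : EuclideanSpace ℝ (Fin p))) ≤
          ω (r + 2 * (K * ν ^ k)) := hω_mono _ _ dist_nonneg hd
      have h3 : ω (r + 2 * (K * ν ^ k)) ≤ ω r + ω (2 * (K * ν ^ k)) :=
        hω_subadd _ _ hr0.le (by positivity)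
      have h4 : ω (2 * (K * ν ^ k)) ≤ t * (2 * (K * ν ^ k)) := hω_lin _
      have h7 : ω r ≤ r ^ α := hω_rpow r
      have h6 : ((1 / K) * ρ ^ k) ^ α ≤ r ^ α := Real.rpow_le_rpow hd00.le hr hα0.le
      have habs : |(1 - δ) * M a - (1 - δ) * M b| = (1 - δ) * |M a - M b| := by
        rw [← mul_sub, abs_mul, abs_of_pos h1δ]
      rw [habs]
      have hB : (0:ℝ) ≤ 2 * (t * (K * ν ^ k)) := by positivity
      have h8 : (1 - δ) * |M a - M b| ≤ (1 - δ) * (r ^ α + 2 * (t * (K * ν ^ k))) := by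
        refine mul_le_mul_of_nonneg_left ?_ h1δ.le
        nlinarith
      have h9 : (1 - δ) * (r ^ α + 2 * (t * (K * ν ^ k))) ≤
          (1 - δ) * r ^ α + 2 * (t * (K * ν ^ k)) := by nlinarith [mul_nonneg hδ0.le hB]
      have h10 : δ * (((1 / K) * ρ ^ k) ^ α) ≤ δ * r ^ α := mul_le_mul_of_nonneg_left h6 hδ0.le
      nlinarith
    · intro a b hd
      have h1 := hMmod b a
      have h2 : ω (dist (b : EuclideanSpace ℝ (Fin p)) (a : EuclideanSpace ℝ (Fin p))) ≤
          t * (K * ν ^ k) := by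
        refine le_trans (hω_lin _) ?_
        have hba : dist (b : EuclideanSpace ℝ (Fin p)) (a : EuclideanSpace ℝ (Fin p)) ≤
            K * ν ^ k := by rw [dist_comm]; exact hd
        exact mul_le_mul_of_nonneg_left hba ht0.le
      have hMfa := hMge a
      have hMfa' := hMle a
      have h4 : |f a| ≤ ‖f‖ := by simpa [Real.norm_eq_abs] using f.norm_coe_le_norm a
      have h3 : |M a| ≤ ‖f‖ + ε / 4 := by
        rw [abs_le]
        constructor
        · linarith [(abs_le.1 h4).1]
        · linarith [(abs_le.1 h4).2, hε'0]
      have hMabs : |M a - f a| ≤ ε / 4 := by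
        rw [abs_le]
        constructor <;> [linarith; linarith]
      have h5 : δ * |M a| ≤ ε / 4 := by
        calc δ * |M a| ≤ (ε / (4 * (‖f‖ + ε / 4 + 1))) * (‖f‖ + ε / 4) :=
              mul_le_mul hδ1 h3 (abs_nonneg _) (by positivity)
          _ ≤ ε / 4 := by
              rw [div_mul_eq_mul_div, div_le_div_iff₀ (by positivity) (by positivity)]
              nlinarith
      have heq : (1 - δ) * M b - f a = ((1 - δ) * (M b - M a) + (M a - f a)) + -(δ * M a) := by
        ring
      have hstep1 : |(1 - δ) * (M b - M a)| ≤ t * (K * ν ^ k) := by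
        rw [abs_mul, abs_of_pos h1δ]
        calc (1 - δ) * |M b - M a| ≤ 1 * |M b - M a| :=
              mul_le_mul_of_nonneg_right (by linarith) (abs_nonneg _)
          _ = |M b - M a| := one_mul _
          _ ≤ _ := le_trans h1 h2
      calc |(1 - δ) * M b - f a| = |((1 - δ) * (M b - M a) + (M a - f a)) + -(δ * M a)| := by
            rw [heq]
        _ ≤ |(1 - δ) * (M b - M a) + (M a - f a)| + |-(δ * M a)| := abs_add_le _ _
        _ ≤ (|(1 - δ) * (M b - M a)| + |M a - f a|) + |-(δ * M a)| := by
            have := abs_add_le ((1 - δ) * (M b - M a)) (M a - f a)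
            linarith
        _ = (|(1 - δ) * (M b - M a)| + |M a - f a|) + δ * |M a| := by
            rw [abs_neg, abs_mul δ (M a), abs_of_pos hδ0]
        _ ≤ (ε / 4 + ε / 4) + ε / 4 := by linarith
        _ ≤ ε := by linarith

/-! ### Facts about `DstarF` -/

private lemma dstarF_zero_mem {p : ℕ} (F : Set (EuclideanSpace ℝ (Fin p))) (f : ↥F → ℝ) :
    (0:ℝ) ∈ {d : ℝ | 0 < volume {r : ℝ | ENNReal.ofReal d ≤ dimH (Subtype.val '' (f ⁻¹' {r}))}} := by
  have huniv : {r : ℝ | ENNReal.ofReal (0:ℝ) ≤ dimH (Subtype.val '' (f ⁻¹' {r}))} = Set.univ := by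
    ext r; simp
  simp only [Set.mem_setOf_eq, huniv]
  rw [Real.volume_univ]
  exact ENNReal.zero_lt_top

private lemma dstarF_bddAbove {p : ℕ} (F : Set (EuclideanSpace ℝ (Fin p))) (f : ↥F → ℝ) :
    BddAbove {d : ℝ | 0 < volume {r : ℝ | ENNReal.ofReal d ≤ dimH (Subtype.val '' (f ⁻¹' {r}))}} := by
  refine ⟨p, fun d hd => ?_⟩
  by_contra hdp
  push_neg at hdp
  have hempty : {r : ℝ | ENNReal.ofReal d ≤ dimH (Subtype.val '' (f ⁻¹' {r}))} = ∅ := by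
    ext r
    simp only [Set.mem_setOf_eq, Set.mem_empty_iff_false, iff_false, not_le]
    calc dimH (Subtype.val '' (f ⁻¹' {r})) ≤
        dimH (Set.univ : Set (EuclideanSpace ℝ (Fin p))) := dimH_mono (Set.subset_univ _)
      _ = Module.finrank ℝ (EuclideanSpace ℝ (Fin p)) := Real.dimH_univ_eq_finrank _
      _ = (p : ℝ≥0∞) := by rw [finrank_euclideanSpace_fin]
      _ < ENNReal.ofReal d := by
          rw [← ENNReal.ofReal_natCast]
          exact (ENNReal.ofReal_lt_ofReal_iff_of_nonneg (Nat.cast_nonneg _)).2 hdp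
  rw [Set.mem_setOf_eq, hempty] at hd
  simp at hd

private lemma dstarF_nonneg {p : ℕ} (F : Set (EuclideanSpace ℝ (Fin p))) (f : ↥F → ℝ) :
    0 ≤ DstarF F f :=
  le_csSup (dstarF_bddAbove F f) (dstarF_zero_mem F f)

private lemma dstarF_eq_zero {p : ℕ} (F : Set (EuclideanSpace ℝ (Fin p))) (f : ↥F → ℝ)
    (h : volume (Set.range f) = 0) : DstarF F f = 0 := by
  have hset : {d : ℝ | 0 < volume {r : ℝ | ENNReal.ofReal d ≤
      dimH (Subtype.val '' (f ⁻¹' {r}))}} = Set.Iic 0 := by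
    ext d
    simp only [Set.mem_setOf_eq, Set.mem_Iic]
    constructor
    · intro hd
      by_contra h0
      push_neg at h0
      have hsub : {r : ℝ | ENNReal.ofReal d ≤ dimH (Subtype.val '' (f ⁻¹' {r}))} ⊆
          Set.range f := by
        intro r hr
        rw [Set.mem_setOf_eq] at hr
        by_contra hr'
        have hpre : f ⁻¹' {r} = ∅ := by
          ext x
          simp only [Set.mem_preimage, Set.mem_singleton_iff, Set.mem_empty_iff_false, iff_false]
          exact fun hxr => hr' ⟨x, hxr⟩
        rw [hpre, Set.image_empty, dimH_empty] at hr
        have : ENNReal.ofReal d = 0 := le_antisymm hr zero_le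
        rw [ENNReal.ofReal_eq_zero] at this
        linarith
      have hle := measure_mono (μ := volume) hsub
      rw [h] at hle
      rw [le_zero_iff.1 hle] at hd
      exact lt_irrefl _ hd
    · intro hd
      have huniv : {r : ℝ | ENNReal.ofReal d ≤ dimH (Subtype.val '' (f ⁻¹' {r}))} =
          Set.univ := by
        ext r
        simp only [Set.mem_setOf_eq, Set.mem_univ, iff_true]
        rw [ENNReal.ofReal_eq_zero.2 hd]
        exact zero_le
      rw [huniv, Real.volume_univ]
      exact ENNReal.zero_lt_top
  rw [DstarF, hset, csSup_Iic]

/-- If `F` is nonempty compact with a `(ν, ρ)` separated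
structure and `0 < α < log ν / log ρ`, then there is a dense Gδ subset `𝒢` of
`C₁^α(F)` on which `λ(f(F)) = 0`, and consequently `D_*(α, F) = 0`. -/
theorem stmt10 {p : ℕ} (F : Set (EuclideanSpace ℝ (Fin p)))
    (hFne : F.Nonempty) (hFc : IsCompact F)
    (ν ρ : ℝ) (hν0 : 0 < ν) (hν1 : ν < 1) (hρ0 : 0 < ρ) (hρ1 : ρ < 1)
    (hsep : SepStructure ν ρ F)
    (α : ℝ) (hα0 : 0 < α) (hα1 : α < Real.log ν / Real.log ρ) :
    (∃ G : Set ↥(HolderBall α F), Dense G ∧ IsGδ G ∧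
      ∀ f ∈ G, volume (Set.range ⇑((f : ↥(HolderBall α F)) : BoundedContinuousFunction ↥F ℝ)) = 0) ∧
    DStar α F = 0 := by
  classical
  haveI : Nonempty ↥F := hFne.to_subtype
  haveI : CompactSpace ↥F := isCompact_iff_compactSpace.mp hFc
  -- the Hölder ball is closed, hence a complete (Baire) space
  have hclosed : IsClosed (HolderBall α F) := by
    have hrepr : HolderBall α F = ⋂ (x : ↥F) (y : ↥F),
        {f : BoundedContinuousFunction ↥F ℝ | |f x - f y| ≤
          dist (x : EuclideanSpace ℝ (Fin p)) (y : EuclideanSpace ℝ (Fin p)) ^ α} := by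
      ext f
      simp only [HolderBall, Set.mem_setOf_eq, Set.mem_iInter]
    rw [hrepr]
    refine isClosed_iInter fun x => isClosed_iInter fun y => ?_
    have hcont : Continuous fun f : BoundedContinuousFunction ↥F ℝ => |f x - f y| :=
      ((continuous_eval_const (F := BoundedContinuousFunction ↥F ℝ) x).sub
        (continuous_eval_const (F := BoundedContinuousFunction ↥F ℝ) y)).abs
    exact isClosed_le hcont continuous_const
  haveI : CompleteSpace ↥(HolderBall α F) := hclosed.completeSpace_coe
  have h0mem : (0 : BoundedContinuousFunction ↥F ℝ) ∈ HolderBall α F := by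
    intro x y
    simp only [BoundedContinuousFunction.coe_zero, Pi.zero_apply, sub_self, abs_zero]
    exact Real.rpow_nonneg dist_nonneg _
  haveI : Nonempty ↥(HolderBall α F) := ⟨⟨0, h0mem⟩⟩
  -- the dense Gδ set
  set G : Set ↥(HolderBall α F) :=
    {g : ↥(HolderBall α F) |
      volume (Set.range ⇑(g : BoundedContinuousFunction ↥F ℝ)) = 0} with hGdef
  have hGdense : Dense G := by
    intro x
    rw [Metric.mem_closure_iff]
    intro ε hε
    obtain ⟨g, hg, hdist, hfin⟩ := key_approx hFne hFc hν0 hν1 hρ0 hρ1 hsep hα0 hα1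
      (x : BoundedContinuousFunction ↥F ℝ) x.2 (half_pos hε)
    refine ⟨⟨g, hg⟩, ?_, ?_⟩
    · exact hfin.measure_zero volume
    · rw [Subtype.dist_eq]
      exact lt_of_le_of_lt hdist (half_lt_self hε)
  have hGδ : IsGδ G := by
    have hGeq : G = ⋂ n : ℕ, {h : ↥(HolderBall α F) |
        volume (Set.range ⇑(h : BoundedContinuousFunction ↥F ℝ)) < (n : ℝ≥0∞)⁻¹} := by
      ext h
      simp only [hGdef, Set.mem_setOf_eq, Set.mem_iInter]
      constructor
      · intro h0 n
        rw [h0]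
        exact ENNReal.inv_pos.2 (by simp)
      · intro hall
        by_contra h0
        obtain ⟨n, hn⟩ := ENNReal.exists_inv_nat_lt h0
        exact absurd (hall n) (not_lt.2 hn.le)
    rw [hGeq]
    refine IsGδ.iInter_of_isOpen fun n => ?_
    rw [Metric.isOpen_iff]
    intro g hg
    rw [Set.mem_setOf_eq] at hg
    have hcr : IsCompact (Set.range ⇑(g : BoundedContinuousFunction ↥F ℝ)) :=
      isCompact_range (g : BoundedContinuousFunction ↥F ℝ).continuous
    obtain ⟨U, hsub, hUopen, hUvol⟩ := Set.exists_isOpen_lt_of_lt _ _ hg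
    obtain ⟨η, hη0, hηsub⟩ := hcr.exists_thickening_subset_open hUopen hsub
    refine ⟨η, hη0, fun hX hmem => ?_⟩
    rw [Metric.mem_ball] at hmem
    have hsub2 : Set.range ⇑(hX : BoundedContinuousFunction ↥F ℝ) ⊆
        Metric.thickening η (Set.range ⇑(g : BoundedContinuousFunction ↥F ℝ)) := by
      rintro _ ⟨x, rfl⟩
      rw [Metric.mem_thickening_iff]
      refine ⟨(g : BoundedContinuousFunction ↥F ℝ) x, ⟨x, rfl⟩, ?_⟩
      refine lt_of_le_of_lt (BoundedContinuousFunction.dist_coe_le_dist x) ?_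
      rw [← Subtype.dist_eq]
      exact hmem
    rw [Set.mem_setOf_eq]
    calc volume (Set.range ⇑(hX : BoundedContinuousFunction ↥F ℝ)) ≤ volume U :=
          measure_mono (hsub2.trans hηsub)
      _ < _ := hUvol
  constructor
  · exact ⟨G, hGdense, hGδ, fun f hf => hf⟩
  · have hDset : {d : ℝ | ∃ G' : Set ↥(HolderBall α F), Dense G' ∧ IsGδ G' ∧
        d = sInf ((fun g : ↥(HolderBall α F) =>
          DstarF F ⇑(g : BoundedContinuousFunction ↥F ℝ)) '' G')} = {0} := by
      ext d
      simp only [Set.mem_setOf_eq, Set.mem_singleton_iff]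
      constructor
      · rintro ⟨G', hG'd, hG'δ, rfl⟩
        have hmix : Dense (G ∩ G') := Dense.inter_of_Gδ hGδ hG'δ hGdense hG'd
        obtain ⟨f0, hf0G, hf0G'⟩ := hmix.nonempty
        have hval : DstarF F ⇑((f0 : ↥(HolderBall α F)) : BoundedContinuousFunction ↥F ℝ) = 0 :=
          dstarF_eq_zero F _ hf0G
        have hmem0 : (0:ℝ) ∈ (fun g : ↥(HolderBall α F) =>
            DstarF F ⇑(g : BoundedContinuousFunction ↥F ℝ)) '' G' :=
          ⟨f0, hf0G', hval⟩
        have hbdd : BddBelow ((fun g : ↥(HolderBall α F) =>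
            DstarF F ⇑(g : BoundedContinuousFunction ↥F ℝ)) '' G') := by
          refine ⟨0, ?_⟩
          rintro _ ⟨g, hg, rfl⟩
          exact dstarF_nonneg F _
        have hne : ((fun g : ↥(HolderBall α F) =>
            DstarF F ⇑(g : BoundedContinuousFunction ↥F ℝ)) '' G').Nonempty := ⟨0, hmem0⟩
        have hle : sInf ((fun g : ↥(HolderBall α F) =>
            DstarF F ⇑(g : BoundedContinuousFunction ↥F ℝ)) '' G') ≤ 0 := csInf_le hbdd hmem0
        have hge : 0 ≤ sInf ((fun g : ↥(HolderBall α F) =>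
            DstarF F ⇑(g : BoundedContinuousFunction ↥F ℝ)) '' G') := by
          refine le_csInf hne ?_
          rintro _ ⟨g, hg, rfl⟩
          exact dstarF_nonneg F _
        linarith
      · rintro rfl
        refine ⟨G, hGdense, hGδ, ?_⟩
        have himg : (fun g : ↥(HolderBall α F) =>
            DstarF F ⇑(g : BoundedContinuousFunction ↥F ℝ)) '' G = {0} := by
          rw [Set.eq_singleton_iff_nonempty_unique_mem]
          constructor
          · obtain ⟨f0, hf0⟩ := hGdense.nonempty
            exact ⟨_, ⟨f0, hf0, rfl⟩⟩
          · rintro _ ⟨g, hg, rfl⟩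
            exact dstarF_eq_zero F _ hg
        rw [himg, csInf_singleton]
    rw [DStar, hDset, csSup_singleton]

end
end

section
/- Let F be the attractor of a bi-Lipschitz iterated function system f₁, …, f_m on ℝ^p satisfying the strong separation condition (each f_i satisfies ν_i|x−y| ≤ |f_i(x) − f_i(y)| ≤ ρ_i|x−y| with 0 < ν_i, ρ_i < 1, and the sets f_i(F) are pairwise disjoint). Then there exists α₀ > 0 such that for every 0 < α < α₀ there is a dense Gδ subset 𝒢 of C₁^α(F) on which λ(f(F)) = 0 for every f ∈ 𝒢, and D_*(α, F) = 0. -/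
open MeasureTheory

noncomputable section

namespace Stmt11

/-! ### Auxiliary facts about `DstarF` -/

lemma dstarF_nonneg {p : ℕ} (F : Set (EuclideanSpace ℝ (Fin p))) (fct : ↥F → ℝ) :
    0 ≤ DstarF F fct := by
  have h0 : (0:ℝ) ∈
      {d : ℝ | 0 < volume {r : ℝ | ENNReal.ofReal d ≤ dimH (Subtype.val '' (fct ⁻¹' {r}))}} := by
    have huniv : {r : ℝ | ENNReal.ofReal (0:ℝ) ≤ dimH (Subtype.val '' (fct ⁻¹' {r}))}
        = Set.univ := by
      ext r; simp [ENNReal.ofReal_zero]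
    simp only [Set.mem_setOf_eq, huniv, Real.volume_univ]
    exact ENNReal.zero_lt_top
  unfold DstarF
  by_cases hb : BddAbove
      {d : ℝ | 0 < volume {r : ℝ | ENNReal.ofReal d ≤ dimH (Subtype.val '' (fct ⁻¹' {r}))}}
  · exact le_csSup hb h0
  · rw [Real.sSup_of_not_bddAbove hb]

lemma dstarF_eq_zero {p : ℕ} (F : Set (EuclideanSpace ℝ (Fin p))) (fct : ↥F → ℝ)
    (hnull : volume (Set.range fct) = 0) : DstarF F fct = 0 := by
  refine le_antisymm ?_ (dstarF_nonneg F fct)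
  refine Real.sSup_le ?_ le_rfl
  intro d hd
  by_contra hdpos
  push_neg at hdpos
  have hsub : {r : ℝ | ENNReal.ofReal d ≤ dimH (Subtype.val '' (fct ⁻¹' {r}))}
      ⊆ Set.range fct := by
    intro r hr
    simp only [Set.mem_setOf_eq] at hr
    rcases (fct ⁻¹' {r}).eq_empty_or_nonempty with he | ⟨x, hx⟩
    · exfalso
      rw [he, Set.image_empty, dimH_empty, nonpos_iff_eq_zero, ENNReal.ofReal_eq_zero] at hr
      exact absurd hr (not_le.mpr hdpos)
    · exact ⟨x, hx⟩
  have hz := measure_mono_null hsub hnull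
  rw [Set.mem_setOf_eq, hz] at hd
  exact lt_irrefl _ hd

lemma isClosed_holderBall (α : ℝ) {p : ℕ} (F : Set (EuclideanSpace ℝ (Fin p))) :
    IsClosed (HolderBall α F) := by
  have heq : HolderBall α F = ⋂ (x : ↥F), ⋂ (y : ↥F),
      {f : BoundedContinuousFunction ↥F ℝ |
        |f x - f y| ≤ dist (x : EuclideanSpace ℝ (Fin p)) (y : EuclideanSpace ℝ (Fin p)) ^ α} := by
    ext f
    simp [HolderBall, Set.mem_iInter]
  rw [heq]
  refine isClosed_iInter fun x => isClosed_iInter fun y => ?_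
  have hc : Continuous fun f : BoundedContinuousFunction ↥F ℝ => |f x - f y| :=
    ((continuous_eval_const x).sub
      (continuous_eval_const y)).abs
  exact isClosed_le hc continuous_const

lemma zero_mem_holderBall (α : ℝ) {p : ℕ} (F : Set (EuclideanSpace ℝ (Fin p))) :
    (0 : BoundedContinuousFunction ↥F ℝ) ∈ HolderBall α F := by
  intro x y
  simp only [BoundedContinuousFunction.coe_zero, Pi.zero_apply, sub_self, abs_zero]
  exact Real.rpow_nonneg dist_nonneg α

/-! ### Subadditivity of `rpow` -/

lemma rpow_add_le {x y α : ℝ} (hx : 0 ≤ x) (hy : 0 ≤ y) (hα0 : 0 ≤ α) (hα1 : α ≤ 1) :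
    (x + y) ^ α ≤ x ^ α + y ^ α := by
  lift x to NNReal using hx
  lift y to NNReal using hy
  have h := NNReal.rpow_add_le_add_rpow x y hα0 hα1
  exact_mod_cast h

/-! ### Paths in a finite graph -/

def pWeight {τ : Type*} (wE : τ → τ → ℝ) : τ → List τ → ℝ
  | _, [] => 0
  | C, C' :: l => wE C C' + pWeight wE C' l

def pEnd {τ : Type*} : τ → List τ → τ
  | C, [] => C
  | _, C' :: l => pEnd C' l

def pCount {τ : Type*} [DecidableEq τ] : τ → List τ → ℕ
  | _, [] => 0
  | C, C' :: l => (if C = C' then 0 else 1) + pCount C' l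

lemma pWeight_nonneg {τ : Type*} {wE : τ → τ → ℝ} (h : ∀ a b, 0 ≤ wE a b) :
    ∀ (C : τ) (l : List τ), 0 ≤ pWeight wE C l := by
  intro C l
  induction l generalizing C with
  | nil => simp [pWeight]
  | cons C' l ih => simpa [pWeight] using add_nonneg (h C C') (ih C')

lemma dist_rep_pEnd {τ : Type*} [DecidableEq τ] {X : Type*} [PseudoMetricSpace X]
    (rep : τ → X) (md : τ → τ → ℝ) (σ : ℝ) (hmd0 : ∀ a b, 0 ≤ md a b)
    (hedge : ∀ a b : τ, dist (rep a) (rep b) ≤ md a b + 2*σ*(if a = b then 0 else 1)) :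
    ∀ (C : τ) (l : List τ),
      dist (rep C) (rep (pEnd C l)) ≤ pWeight md C l + 2*σ*(pCount C l : ℝ) := by
  intro C l
  induction l generalizing C with
  | nil => simp [pWeight, pEnd, pCount]
  | cons C' l ih =>
    have h2 := ih C'
    have htri := dist_triangle (rep C) (rep C') (rep (pEnd C' l))
    by_cases hcc : C = C'
    · subst hcc
      have h0 := hmd0 C C
      simp only [pWeight, pEnd, pCount, if_pos rfl, Nat.cast_add, Nat.cast_zero, reduceIte]
      push_cast
      linarith
    · have h1 := hedge C C'
      rw [if_neg hcc] at h1
      simp only [pWeight, pEnd, pCount, if_neg hcc, Nat.cast_add, Nat.cast_one]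
      linarith

lemma pWeight_add_rpow {τ : Type*} {md : τ → τ → ℝ} (hmd : ∀ a b, 0 ≤ md a b)
    {α : ℝ} (hα0 : 0 ≤ α) (hα1 : α ≤ 1) {b : ℝ} (hb : 0 ≤ b) :
    ∀ (C : τ) (l : List τ),
      (pWeight md C l + b) ^ α ≤ pWeight (fun a c => md a c ^ α) C l + b ^ α := by
  intro C l
  induction l generalizing C with
  | nil => simp [pWeight]
  | cons C' l ih =>
    have h0 : 0 ≤ pWeight md C' l + b := add_nonneg (pWeight_nonneg hmd C' l) hb
    have h1 : (md C C' + (pWeight md C' l + b)) ^ α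
        ≤ md C C' ^ α + (pWeight md C' l + b) ^ α := rpow_add_le (hmd C C') h0 hα0 hα1
    have h2 := ih C'
    simp only [pWeight]
    calc (md C C' + pWeight md C' l + b) ^ α
        = (md C C' + (pWeight md C' l + b)) ^ α := by ring_nf
      _ ≤ md C C' ^ α + (pWeight md C' l + b) ^ α := h1
      _ ≤ md C C' ^ α + (pWeight (fun a c => md a c ^ α) C' l + b ^ α) := by linarith
      _ = md C C' ^ α + pWeight (fun a c => md a c ^ α) C' l + b ^ α := by ring

lemma le_pWeight {τ : Type*} [DecidableEq τ] {wE : τ → τ → ℝ} {γα : ℝ}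
    (h0 : ∀ a b, 0 ≤ wE a b) (hγ : ∀ a b, a ≠ b → γα ≤ wE a b) :
    ∀ (C : τ) (l : List τ), γα * (pCount C l : ℝ) ≤ pWeight wE C l := by
  intro C l
  induction l generalizing C with
  | nil => simp [pWeight, pCount]
  | cons C' l ih =>
    have h2 := ih C'
    simp only [pWeight, pCount, Nat.cast_add]
    by_cases hcc : C = C'
    · simp only [hcc, if_true, reduceIte]
      push_cast
      nlinarith [h0 C' C', h0 C C', ih C']
    · simp only [hcc, if_false, reduceIte]
      push_cast
      nlinarith [hγ C C' hcc, ih C']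

/-! ### The key arithmetic inequality -/

lemma key_ineq {α ε' η σ γα : ℝ} (hα0 : 0 < α) (hα1 : α < 1) (hσ : 0 ≤ σ)
    (hγα : 0 < γα) (hη : 0 < η) (hε' : 0 ≤ ε')
    (hSC : (2*σ/(η*γα)) ^ (α/(1-α)) ≤ 2*ε') :
    ∀ n : ℕ, (2*σ*(n:ℝ)) ^ α ≤ 2*ε' + η*(n:ℝ)*γα := by
  intro n
  set A := 2*σ/(η*γα) with hA
  have hA0 : 0 ≤ A := by positivity
  have hx0 : (0:ℝ) ≤ η*γα*(n:ℝ) := by positivity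
  have hne : η*γα ≠ 0 := by positivity
  have hid : 2*σ*(n:ℝ) = A * (η*γα*(n:ℝ)) := by
    rw [hA, div_mul_eq_mul_div, eq_div_iff hne]
    ring
  rw [hid, Real.mul_rpow hA0 hx0]
  set p₂ := A ^ (α/(1-α)) with hp₂
  have hp₂0 : 0 ≤ p₂ := Real.rpow_nonneg hA0 _
  have h1α : (1:ℝ) - α ≠ 0 := sub_ne_zero.mpr (Ne.symm hα1.ne)
  have hAα : A ^ α = p₂ ^ (1-α) := by
    rw [hp₂, ← Real.rpow_mul hA0, div_mul_cancel₀ _ h1α]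
  have hgm := Real.geom_mean_le_arith_mean2_weighted hα0.le (by linarith : (0:ℝ) ≤ 1 - α)
    hx0 hp₂0 (by ring)
  calc A ^ α * (η*γα*(n:ℝ)) ^ α = (η*γα*(n:ℝ))^α * p₂^(1-α) := by rw [hAα]; ring
    _ ≤ α*(η*γα*(n:ℝ)) + (1-α)*p₂ := hgm
    _ ≤ (η*γα*(n:ℝ)) + p₂ := by nlinarith
    _ ≤ 2*ε' + η*(n:ℝ)*γα := by nlinarith

/-! ### Cells of the IFS -/

def cellSet {E : Type*} {m : ℕ} (f : Fin m → E → E) (F : Set E) : List (Fin m) → Set E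
  | [] => F
  | i :: w => f i '' cellSet f F w

variable {E : Type*} [MetricSpace E] {m : ℕ} {f : Fin m → E → E} {F : Set E}

lemma cellSet_subset (hsub : ∀ i, f i '' F ⊆ F) :
    ∀ w : List (Fin m), cellSet f F w ⊆ F := by
  intro w
  induction w with
  | nil => exact subset_rfl
  | cons i w ih =>
    intro x hx
    simp only [cellSet] at hx
    obtain ⟨y, hy, rfl⟩ := hx
    exact hsub i (Set.mem_image_of_mem (f i) (ih hy))

lemma cellSet_nonempty (hne : F.Nonempty) :
    ∀ w : List (Fin m), (cellSet f F w).Nonempty := by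
  intro w
  induction w with
  | nil => exact hne
  | cons i w ih => exact ih.image (f i)

lemma cellSet_isCompact (hc : ∀ i, Continuous (f i)) (hFc : IsCompact F) :
    ∀ w : List (Fin m), IsCompact (cellSet f F w) := by
  intro w
  induction w with
  | nil => exact hFc
  | cons i w ih => exact ih.image (hc i)

lemma cellSet_diam {ρM D : ℝ} (hρ' : ∀ i x y, dist (f i x) (f i y) ≤ ρM * dist x y)
    (hρM0 : 0 ≤ ρM) (hD : ∀ x ∈ F, ∀ y ∈ F, dist x y ≤ D) :
    ∀ w : List (Fin m), ∀ x ∈ cellSet f F w, ∀ y ∈ cellSet f F w,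
      dist x y ≤ ρM ^ w.length * D := by
  intro w
  induction w with
  | nil =>
    intro x hx y hy
    simpa using hD x hx y hy
  | cons i w ih =>
    rintro x hx y hy
    simp only [cellSet] at hx hy
    obtain ⟨a, ha, rfl⟩ := hx
    obtain ⟨b, hb, rfl⟩ := hy
    calc dist (f i a) (f i b) ≤ ρM * dist a b := hρ' i a b
      _ ≤ ρM * (ρM ^ w.length * D) := by
          exact mul_le_mul_of_nonneg_left (ih a ha b hb) hρM0
      _ = ρM ^ (i :: w).length * D := by
          simp [List.length_cons, pow_succ]
          ring

lemma cellSet_gap {νm δ' : ℝ} (hν' : ∀ i x y, νm * dist x y ≤ dist (f i x) (f i y))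
    (hνm0 : 0 ≤ νm) (hνm1 : νm ≤ 1) (hδ0 : 0 ≤ δ')
    (hδ : ∀ i j, i ≠ j → ∀ x ∈ f i '' F, ∀ y ∈ f j '' F, δ' ≤ dist x y)
    (hsub : ∀ i, f i '' F ⊆ F) :
    ∀ w w' : List (Fin m), w.length = w'.length → w ≠ w' →
      ∀ x ∈ cellSet f F w, ∀ y ∈ cellSet f F w', νm ^ w.length * δ' ≤ dist x y := by
  intro w
  induction w with
  | nil =>
    intro w' hlen hne
    cases w' with
    | nil => exact absurd rfl hne
    | cons j w' => simp at hlen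
  | cons i w ih =>
    intro w' hlen hne
    cases w' with
    | nil => simp at hlen
    | cons j w' =>
      simp only [List.length_cons, Nat.add_right_cancel_iff] at hlen
      intro x hx y hy
      simp only [cellSet] at hx hy
      by_cases hij : i = j
      · subst hij
        have hne' : w ≠ w' := by
          intro hww; exact hne (by rw [hww])
        obtain ⟨a, ha, rfl⟩ := hx
        obtain ⟨b, hb, rfl⟩ := hy
        calc νm ^ (i :: w).length * δ' = νm * (νm ^ w.length * δ') := by
              simp [List.length_cons, pow_succ]; ring
          _ ≤ νm * dist a b := by
              exact mul_le_mul_of_nonneg_left (ih w' hlen hne' a ha b hb) hνm0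
          _ ≤ dist (f i a) (f i b) := hν' i a b
      · have hx' : x ∈ f i '' F := by
          obtain ⟨a, ha, rfl⟩ := hx
          exact Set.mem_image_of_mem (f i) (cellSet_subset hsub w ha)
        have hy' : y ∈ f j '' F := by
          obtain ⟨b, hb, rfl⟩ := hy
          exact Set.mem_image_of_mem (f j) (cellSet_subset hsub w' hb)
        have h1 : δ' ≤ dist x y := hδ i j hij x hx' y hy'
        have h2 : νm ^ (i :: w).length * δ' ≤ 1 * δ' :=
          mul_le_mul_of_nonneg_right (pow_le_one₀ hνm0 hνm1) hδ0
        rw [one_mul] at h2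
        exact h2.trans h1

lemma cellSet_exists (hinv : F = ⋃ i, f i '' F) :
    ∀ (k : ℕ) (x : E), x ∈ F → ∃ w : Fin k → Fin m, x ∈ cellSet f F (List.ofFn w) := by
  intro k
  induction k with
  | zero =>
    intro x hx
    exact ⟨fun i => i.elim0, by simpa [List.ofFn_zero, cellSet] using hx⟩
  | succ k ih =>
    intro x hx
    rw [hinv] at hx
    obtain ⟨i, ⟨a, haF, rfl⟩⟩ := Set.mem_iUnion.mp hx
    obtain ⟨w, hw⟩ := ih a haF
    refine ⟨Fin.cons i w, ?_⟩
    have : List.ofFn (Fin.cons i w : Fin (k+1) → Fin m) = i :: List.ofFn w := by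
      simp [List.ofFn_succ, Fin.cons_zero, Fin.cons_succ]
    rw [this]
    simp only [cellSet]
    exact Set.mem_image_of_mem (f i) hw


/-! ### Density of finite-range Hölder functions -/

set_option maxHeartbeats 2000000 in
lemma density {p m : ℕ} (hm : 0 < m)
    (f : Fin m → EuclideanSpace ℝ (Fin p) → EuclideanSpace ℝ (Fin p))
    (F : Set (EuclideanSpace ℝ (Fin p))) (hFne : F.Nonempty) (hFc : IsCompact F)
    (hsub : ∀ i, f i '' F ⊆ F) (hinv : F = ⋃ i, f i '' F)
    {νm ρM δ' D α : ℝ}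
    (hνm0 : 0 < νm) (hνm1 : νm ≤ 1) (hρM0 : 0 ≤ ρM) (hρM1 : ρM < 1)
    (hν' : ∀ i x y, νm * dist x y ≤ dist (f i x) (f i y))
    (hρ' : ∀ i x y, dist (f i x) (f i y) ≤ ρM * dist x y)
    (hδ0 : 0 < δ') (hδ : ∀ i j, i ≠ j → ∀ x ∈ f i '' F, ∀ y ∈ f j '' F, δ' ≤ dist x y)
    (hD0 : 0 ≤ D) (hD : ∀ x ∈ F, ∀ y ∈ F, dist x y ≤ D)
    (hα0 : 0 < α) (hα1 : α < 1) (hgeom : ρM < νm ^ α)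
    (h : BoundedContinuousFunction ↥F ℝ) (hh : h ∈ HolderBall α F)
    {ε : ℝ} (hε : 0 < ε) :
    ∃ g : BoundedContinuousFunction ↥F ℝ, g ∈ HolderBall α F ∧
      (Set.range ⇑g).Finite ∧ dist g h < ε := by
  haveI : CompactSpace ↥F := isCompact_iff_compactSpace.mp hFc
  haveI : Nonempty (Fin m) := ⟨⟨0, hm⟩⟩
  have hcont : ∀ i, Continuous (f i) := by
    intro i
    have : LipschitzWith ⟨ρM, hρM0⟩ (f i) :=
      LipschitzWith.of_dist_le_mul (fun x y => by exact hρ' i x y)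
    exact this.continuous
  -- constants
  set B : ℝ := D ^ α with hBdef
  have hB0 : 0 ≤ B := Real.rpow_nonneg hD0 α
  have h8B : (0:ℝ) < 8*(B+1) := by nlinarith [hB0]
  set η : ℝ := min (ε/(8*(B+1))) 2⁻¹ with hηdef
  have hη0 : 0 < η := lt_min (div_pos hε h8B) (by norm_num)
  have hη1 : η ≤ 1 := le_trans (min_le_right _ _) (by norm_num)
  set θ : ℝ := 1 - η with hθdef
  have hθ0 : 0 ≤ θ := by rw [hθdef]; linarith
  have hθ1 : θ ≤ 1 := by rw [hθdef]; linarith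
  have hθη : θ + η = 1 := by rw [hθdef]; ring
  set ε' : ℝ := ε/8 with hε'def
  have hε'0 : 0 < ε' := by rw [hε'def]; linarith
  have hδα0 : (0:ℝ) < δ' ^ α := Real.rpow_pos_of_pos hδ0 α
  have hνα0 : (0:ℝ) < νm ^ α := Real.rpow_pos_of_pos hνm0 α
  -- choice of the level k
  have hr0 : 0 ≤ ρM / νm ^ α := div_nonneg hρM0 hνα0.le
  have hr1 : ρM / νm ^ α < 1 := (div_lt_one hνα0).mpr hgeom
  have t1 : Filter.Tendsto (fun k : ℕ => (ρM ^ k * D) ^ α) Filter.atTop (nhds 0) := by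
    have base : Filter.Tendsto (fun k : ℕ => ρM ^ k * D) Filter.atTop (nhds 0) := by
      simpa using (tendsto_pow_atTop_nhds_zero_of_lt_one hρM0 hρM1).mul_const D
    have hcomp := base.rpow_const (Or.inr hα0.le)
    simpa [Real.zero_rpow hα0.ne'] using hcomp
  have t2 : Filter.Tendsto
      (fun k : ℕ => ((2*D/(η*(δ' ^ α))) * (ρM / νm ^ α) ^ k) ^ (α/(1-α)))
      Filter.atTop (nhds 0) := by
    have base : Filter.Tendsto (fun k : ℕ => (2*D/(η*(δ' ^ α))) * (ρM / νm ^ α) ^ k)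
        Filter.atTop (nhds 0) := by
      simpa using (tendsto_pow_atTop_nhds_zero_of_lt_one hr0 hr1).const_mul (2*D/(η*(δ' ^ α)))
    have hexp : (0:ℝ) ≤ α/(1-α) := div_nonneg hα0.le (by linarith)
    have hexp' : α/(1-α) ≠ 0 := (div_pos hα0 (by linarith)).ne'
    have hcomp := base.rpow_const (Or.inr hexp)
    simpa [Real.zero_rpow hexp'] using hcomp
  have e1 := t1.eventually_lt_const (show (0:ℝ) < ε/8 by linarith)
  have e2 := t2.eventually_lt_const (show (0:ℝ) < 2*ε' by linarith)
  obtain ⟨k, hk1, hk2⟩ := (e1.and e2).exists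
  -- cells at level k
  haveI : Nonempty (Fin k → Fin m) := ⟨fun _ => ⟨0, hm⟩⟩
  haveI : DecidableEq (Fin k → Fin m) := Classical.decEq _
  set σ : ℝ := ρM ^ k * D with hσdef
  have hσ0 : 0 ≤ σ := mul_nonneg (pow_nonneg hρM0 k) hD0
  set γ : ℝ := νm ^ k * δ' with hγdef
  have hγ0 : 0 < γ := mul_pos (pow_pos hνm0 k) hδ0
  set γα : ℝ := γ ^ α with hγαdef
  have hγα0 : 0 < γα := Real.rpow_pos_of_pos hγ0 α
  set cell : (Fin k → Fin m) → Set (EuclideanSpace ℝ (Fin p)) :=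
    fun C => cellSet f F (List.ofFn C) with hcelldef
  have hcellsub : ∀ C, cell C ⊆ F := fun C => cellSet_subset hsub _
  have hcellne : ∀ C, (cell C).Nonempty := fun C => cellSet_nonempty hFne _
  have hcellcp : ∀ C, IsCompact (cell C) := fun C => cellSet_isCompact hcont hFc _
  have hdiam : ∀ C, ∀ x ∈ cell C, ∀ y ∈ cell C, dist x y ≤ σ := by
    intro C x hx y hy
    have hcd := cellSet_diam hρ' hρM0 hD (List.ofFn C) x hx y hy
    rwa [List.length_ofFn] at hcd
  have hgap : ∀ C C' : Fin k → Fin m, C ≠ C' →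
      ∀ x ∈ cell C, ∀ y ∈ cell C', γ ≤ dist x y := by
    intro C C' hne x hx y hy
    have hlen : (List.ofFn C).length = (List.ofFn C').length := by simp
    have hne' : List.ofFn C ≠ List.ofFn C' := fun hh' => hne (List.ofFn_injective hh')
    have hcg := cellSet_gap hν' hνm0.le hνm1 hδ0.le hδ hsub (List.ofFn C) (List.ofFn C')
      hlen hne' x hx y hy
    rwa [List.length_ofFn] at hcg
  -- representatives and coding
  have hrepex : ∀ C : Fin k → Fin m, ∃ z : ↥F, (z : EuclideanSpace ℝ (Fin p)) ∈ cell C := by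
    intro C
    obtain ⟨x, hx⟩ := hcellne C
    exact ⟨⟨x, hcellsub C hx⟩, hx⟩
  choose rep hrep using hrepex
  have hcodex : ∀ x : ↥F, ∃ C : Fin k → Fin m, (x : EuclideanSpace ℝ (Fin p)) ∈ cell C :=
    fun x => cellSet_exists hinv k x x.2
  choose code hcode using hcodex
  -- minimal distances between cells
  have hminex : ∀ C C' : Fin k → Fin m, ∃ d : ℝ,
      (∀ x ∈ cell C, ∀ y ∈ cell C', d ≤ dist x y) ∧
      (∃ x ∈ cell C, ∃ y ∈ cell C', dist x y ≤ d) := by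
    intro C C'
    obtain ⟨z, hz, hzmin⟩ := ((hcellcp C).prod (hcellcp C')).exists_isMinOn
      ((hcellne C).prod (hcellne C'))
      ((continuous_fst.dist continuous_snd).continuousOn)
    refine ⟨dist z.1 z.2, fun x hx y hy => ?_, ⟨z.1, hz.1, z.2, hz.2, le_rfl⟩⟩
    have hzm := isMinOn_iff.mp hzmin (x, y) (Set.mem_prod.mpr ⟨hx, hy⟩)
    simpa using hzm
  choose md hmd1 hmd2 using hminex
  have hmd0 : ∀ C C', 0 ≤ md C C' := by
    intro C C'
    obtain ⟨x, hx, y, hy, hxy⟩ := hmd2 C C'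
    exact le_trans dist_nonneg hxy
  have hmdsymm : ∀ C C', md C C' = md C' C := by
    intro C C'
    apply le_antisymm
    · obtain ⟨x, hx, y, hy, hxy⟩ := hmd2 C' C
      calc md C C' ≤ dist y x := hmd1 C C' y hy x hx
        _ = dist x y := dist_comm y x
        _ ≤ md C' C := hxy
    · obtain ⟨x, hx, y, hy, hxy⟩ := hmd2 C C'
      calc md C' C ≤ dist y x := hmd1 C' C y hy x hx
        _ = dist x y := dist_comm y x
        _ ≤ md C C' := hxy
  have hmdγ : ∀ C C', C ≠ C' → γ ≤ md C C' := by
    intro C C' hne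
    obtain ⟨x, hx, y, hy, hxy⟩ := hmd2 C C'
    exact (hgap C C' hne x hx y hy).trans hxy
  set wE : (Fin k → Fin m) → (Fin k → Fin m) → ℝ := fun A B' => md A B' ^ α with hwEdef
  have hwE0 : ∀ A B', 0 ≤ wE A B' := fun A B' => Real.rpow_nonneg (hmd0 A B') α
  have hwEγ : ∀ A B', A ≠ B' → γα ≤ wE A B' := fun A B' hne =>
    Real.rpow_le_rpow hγ0.le (hmdγ A B' hne) hα0.le
  have hh' : ∀ u w : ↥F, |h u - h w| ≤
      dist (u : EuclideanSpace ℝ (Fin p)) (w : EuclideanSpace ℝ (Fin p)) ^ α := hh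
  -- base point
  set x₀ : ↥F := ⟨hFne.choose, hFne.choose_spec⟩ with hx₀def
  set c : ℝ := h x₀ with hcdef
  set a : (Fin k → Fin m) → ℝ := fun C => c + θ * (h (rep C) - c) with hadef
  -- edge estimate
  have hedge : ∀ A B' : Fin k → Fin m,
      dist (rep A) (rep B') ≤ md A B' + 2*σ*(if A = B' then 0 else 1) := by
    intro A B'
    by_cases hAB : A = B'
    · subst hAB
      rw [if_pos rfl, dist_self]
      have := hmd0 A A
      linarith
    · rw [if_neg hAB]
      obtain ⟨x, hx, y, hy, hxy⟩ := hmd2 A B'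
      have htri := dist_triangle4 ((rep A : ↥F) : EuclideanSpace ℝ (Fin p)) x y
        ((rep B' : ↥F) : EuclideanSpace ℝ (Fin p))
      have h1 : dist ((rep A : ↥F) : EuclideanSpace ℝ (Fin p)) x ≤ σ :=
        hdiam A _ (hrep A) x hx
      have h2 : dist y ((rep B' : ↥F) : EuclideanSpace ℝ (Fin p)) ≤ σ := by
        rw [dist_comm]; exact hdiam B' _ (hrep B') y hy
      rw [Subtype.dist_eq]
      linarith
  -- the key inequality
  have hpowrpow : ∀ x : ℝ, 0 ≤ x → ((x ^ k : ℝ)) ^ α = (x ^ α) ^ k := by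
    intro x hx
    rw [← Real.rpow_natCast x k, ← Real.rpow_mul hx, mul_comm ((k:ℕ):ℝ) α,
      Real.rpow_mul hx, Real.rpow_natCast]
  have hγαeq : γα = (νm ^ α) ^ k * δ' ^ α := by
    rw [hγαdef, hγdef, Real.mul_rpow (pow_nonneg hνm0.le k) hδ0.le, hpowrpow νm hνm0.le]
  have hAeq : 2*σ/(η*γα) = (2*D/(η*(δ' ^ α))) * (ρM / νm ^ α) ^ k := by
    rw [hσdef, hγαeq, div_pow]
    field_simp
  have hSC : (2*σ/(η*γα)) ^ (α/(1-α)) ≤ 2*ε' := by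
    rw [hAeq]; exact hk2.le
  have hkey := key_ineq hα0 hα1 hσ0 hγα0 hη0 hε'0.le hSC
  -- chain estimate
  have hchain : ∀ (C : Fin k → Fin m) (l : List (Fin k → Fin m)),
      a (pEnd C l) - pWeight wE C l ≤ a C + 2*ε' := by
    intro C l
    have h1 := dist_rep_pEnd rep md σ hmd0 hedge C l
    set n : ℕ := pCount C l with hn
    have hn0 : (0:ℝ) ≤ (n:ℝ) := Nat.cast_nonneg n
    have hpw0 : 0 ≤ pWeight md C l := pWeight_nonneg hmd0 C l
    have h2σn : (0:ℝ) ≤ 2*σ*(n:ℝ) := by positivity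
    have h2 : |h (rep (pEnd C l)) - h (rep C)| ≤ (pWeight md C l + 2*σ*(n:ℝ)) ^ α := by
      refine (hh' _ _).trans ?_
      refine Real.rpow_le_rpow dist_nonneg ?_ hα0.le
      rw [← Subtype.dist_eq, dist_comm]
      exact h1
    have h3 : (pWeight md C l + 2*σ*(n:ℝ)) ^ α ≤ pWeight wE C l + (2*σ*(n:ℝ)) ^ α :=
      pWeight_add_rpow hmd0 hα0.le hα1.le h2σn C l
    have h4 : γα * (n:ℝ) ≤ pWeight wE C l := le_pWeight hwE0 hwEγ C l
    have h5 : (2*σ*(n:ℝ)) ^ α ≤ 2*ε' + η*(n:ℝ)*γα := hkey n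
    have h6 : a (pEnd C l) - a C = θ * (h (rep (pEnd C l)) - h (rep C)) := by
      simp only [hadef]; ring
    have h7 : h (rep (pEnd C l)) - h (rep C) ≤ pWeight wE C l + (2*σ*(n:ℝ)) ^ α :=
      (le_abs_self _).trans (h2.trans h3)
    have h8 : θ * (h (rep (pEnd C l)) - h (rep C))
        ≤ θ * pWeight wE C l + θ * ((2*σ*(n:ℝ)) ^ α) := by
      have := mul_le_mul_of_nonneg_left h7 hθ0
      linarith [this, mul_add θ (pWeight wE C l) ((2*σ*(n:ℝ)) ^ α)]
    have hX0 : (0:ℝ) ≤ 2*ε' + η*(n:ℝ)*γα := by positivity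
    have h9 : θ * ((2*σ*(n:ℝ)) ^ α) ≤ θ * (2*ε' + η*(n:ℝ)*γα) :=
      mul_le_mul_of_nonneg_left h5 hθ0
    have h10 : θ * (2*ε' + η*(n:ℝ)*γα) ≤ 2*ε' + η*(n:ℝ)*γα :=
      mul_le_of_le_one_left hX0 hθ1
    have h11 : η*(n:ℝ)*γα ≤ η * pWeight wE C l := by
      have hmul := mul_le_mul_of_nonneg_left h4 hη0.le
      calc η*(n:ℝ)*γα = η * (γα * (n:ℝ)) := by ring
        _ ≤ η * pWeight wE C l := hmul
    have h12 : θ * pWeight wE C l + η * pWeight wE C l = pWeight wE C l := by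
      rw [← add_mul, hθη, one_mul]
    linarith [h6, h8, h9, h10, h11, h12]
  -- the value function
  obtain ⟨Cm, -, hCm⟩ := Finset.exists_max_image (Finset.univ : Finset (Fin k → Fin m)) a
    ⟨Classical.arbitrary _, Finset.mem_univ _⟩
  set S : (Fin k → Fin m) → Set ℝ := fun C =>
    Set.range (fun l : List (Fin k → Fin m) => a (pEnd C l) - pWeight wE C l) with hSdef
  have hmem0 : ∀ C, a C ∈ S C := by
    intro C
    exact ⟨[], by simp [pEnd, pWeight]⟩
  have hbdd : ∀ C, BddAbove (S C) := by
    intro C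
    refine ⟨a Cm, ?_⟩
    rintro y ⟨l, rfl⟩
    have hw := pWeight_nonneg hwE0 C l
    have hc' := hCm (pEnd C l) (Finset.mem_univ _)
    simp only []
    linarith
  set v : (Fin k → Fin m) → ℝ := fun C => sSup (S C) with hvdef
  have hv1 : ∀ C, a C ≤ v C := fun C => le_csSup (hbdd C) (hmem0 C)
  have hv2 : ∀ C, v C ≤ a C + 2*ε' := by
    intro C
    refine csSup_le ⟨a C, hmem0 C⟩ ?_
    rintro y ⟨l, rfl⟩
    exact hchain C l
  have hv3 : ∀ C C', v C' ≤ v C + wE C C' := by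
    intro C C'
    refine csSup_le ⟨a C', hmem0 C'⟩ ?_
    rintro y ⟨l, rfl⟩
    show a (pEnd C' l) - pWeight wE C' l ≤ v C + wE C C'
    have hmem : a (pEnd C' l) - pWeight wE C' l - wE C C' ∈ S C := by
      refine ⟨C' :: l, ?_⟩
      simp only [pEnd, pWeight]
      ring
    have hle := le_csSup (hbdd C) hmem
    have hvC : sSup (S C) = v C := rfl
    rw [hvC] at hle
    linarith
  -- the approximating function
  set gfun : ↥F → ℝ := fun x => v (code x) with hgfundef
  have hloc : ∀ x y : ↥F, code x ≠ code y → γ ≤ dist x y := by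
    intro x y hne
    rw [Subtype.dist_eq]
    exact hgap _ _ hne _ (hcode x) _ (hcode y)
  have hcontg : Continuous gfun := by
    rw [Metric.continuous_iff]
    intro x εx hεx
    refine ⟨γ, hγ0, fun y hy => ?_⟩
    by_cases hcc : code y = code x
    · simp only [hgfundef, hcc]
      simpa using hεx
    · exact absurd (hloc y x hcc) (not_le.mpr hy)
  set g : BoundedContinuousFunction ↥F ℝ :=
    BoundedContinuousFunction.mkOfCompact ⟨gfun, hcontg⟩ with hgdef
  have hgcoe : ∀ x, g x = v (code x) := fun x => rfl
  refine ⟨g, ?_, ?_, ?_⟩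
  · -- Hölder
    intro x y
    rw [hgcoe x, hgcoe y]
    by_cases hcc : code x = code y
    · rw [hcc, sub_self, abs_zero]
      exact Real.rpow_nonneg dist_nonneg α
    · have hb1 : v (code x) ≤ v (code y) + wE (code y) (code x) := hv3 _ _
      have hb2 : v (code y) ≤ v (code x) + wE (code x) (code y) := hv3 _ _
      have hsym : wE (code y) (code x) = wE (code x) (code y) := by
        simp only [hwEdef, hmdsymm]
      have hble : wE (code x) (code y)
          ≤ dist (x : EuclideanSpace ℝ (Fin p)) (y : EuclideanSpace ℝ (Fin p)) ^ α := by
        refine Real.rpow_le_rpow (hmd0 _ _) ?_ hα0.le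
        exact hmd1 _ _ _ (hcode x) _ (hcode y)
      rw [abs_sub_le_iff]
      constructor
      · linarith [hb2]
      · linarith [hb1, hsym]
  · -- finite range
    have hrange : Set.range ⇑g ⊆ Set.range v := by
      rintro _ ⟨x, rfl⟩
      exact ⟨code x, (hgcoe x).symm⟩
    exact (Set.finite_range v).subset hrange
  · -- distance
    have hdistle : dist g h ≤ ε/2 := by
      rw [BoundedContinuousFunction.dist_le (by linarith)]
      intro x
      have d1 : |v (code x) - a (code x)| ≤ 2*ε' := by
        rw [abs_le]
        constructor
        · linarith [hv1 (code x)]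
        · linarith [hv2 (code x)]
      have hhd : |h (rep (code x)) - c| ≤ B := by
        rw [hcdef]
        refine (hh' (rep (code x)) x₀).trans ?_
        rw [hBdef]
        refine Real.rpow_le_rpow dist_nonneg ?_ hα0.le
        exact hD _ (rep (code x)).2 _ x₀.2
      have d2 : |a (code x) - h (rep (code x))| ≤ η * B := by
        have heq : a (code x) - h (rep (code x)) = -(η * (h (rep (code x)) - c)) := by
          simp only [hadef, hθdef]; ring
        rw [heq, abs_neg, abs_mul, abs_of_nonneg hη0.le]
        exact mul_le_mul_of_nonneg_left hhd hη0.le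
      have d3 : |h (rep (code x)) - h x| ≤ σ ^ α := by
        refine (hh' (rep (code x)) x).trans ?_
        refine Real.rpow_le_rpow dist_nonneg ?_ hα0.le
        exact hdiam (code x) _ (hrep (code x)) _ (hcode x)
      have habs : |v (code x) - h x| ≤ |v (code x) - a (code x)|
          + |a (code x) - h (rep (code x))| + |h (rep (code x)) - h x| := by
        have h3 := abs_add_three (v (code x) - a (code x)) (a (code x) - h (rep (code x)))
          (h (rep (code x)) - h x)
        have heq : v (code x) - a (code x) + (a (code x) - h (rep (code x)))
            + (h (rep (code x)) - h x) = v (code x) - h x := by ring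
        rwa [heq] at h3
      have hηB : η * B ≤ ε/8 := by
        have h1 : η ≤ ε/(8*(B+1)) := min_le_left _ _
        have h2 : η * B ≤ (ε/(8*(B+1))) * B := mul_le_mul_of_nonneg_right h1 hB0
        have h3 : (ε/(8*(B+1))) * B ≤ ε/8 := by
          rw [div_mul_eq_mul_div, div_le_div_iff₀ h8B (by norm_num)]
          nlinarith [hε.le, hB0]
        linarith
      have hσα : σ ^ α ≤ ε/8 := hk1.le
      have hfin : dist (g x) (h x) ≤ ε/2 := by
        rw [hgcoe x, Real.dist_eq]
        have : |v (code x) - h x| ≤ 2*ε' + η*B + σ^α := by linarith [habs, d1, d2, d3]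
        rw [hε'def] at this
        linarith
      exact hfin
    have := half_lt_self hε
    linarith [hdistle]

end Stmt11

/-- If `F` is the attractor of a bi-Lipschitz IFS on `ℝ^p`
satisfying  the strong separation condition, then there is `α₀ > 0` such that for
every `0 < α < α₀` there is a dense Gδ subset `𝒢` of `C₁^α(F)` on which
`λ(f(F)) = 0` for every `f ∈ 𝒢`, and `D_*(α, F) = 0`. -/
theorem stmt11 {p : ℕ} (m : ℕ) (hm : 0 < m)
    (f : Fin m → EuclideanSpace ℝ (Fin p) → EuclideanSpace ℝ (Fin p))
    (ν ρ : Fin m → ℝ)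
    (hν : ∀ i, 0 < ν i ∧ ν i < 1) (hρ : ∀ i, 0 < ρ i ∧ ρ i < 1)
    (hbl : ∀ i, ∀ x y, ν i * dist x y ≤ dist (f i x) (f i y) ∧
      dist (f i x) (f i y) ≤ ρ i * dist x y)
    (F : Set (EuclideanSpace ℝ (Fin p))) (hFne : F.Nonempty) (hFc : IsCompact F)
    (hinv : F = ⋃ i, f i '' F)
    (hssc : ∀ i j, i ≠ j → Disjoint (f i '' F) (f j '' F)) :
    ∃ α₀ : ℝ, 0 < α₀ ∧ ∀ α : ℝ, 0 < α → α < α₀ →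
      (∃ G : Set ↥(HolderBall α F), Dense G ∧ IsGδ G ∧
        ∀ g ∈ G, volume (Set.range
          ⇑((g : ↥(HolderBall α F)) : BoundedContinuousFunction ↥F ℝ)) = 0) ∧
      DStar α F = 0 := by
  classical
  have huniv : (Finset.univ : Finset (Fin m)).Nonempty := ⟨⟨0, hm⟩, Finset.mem_univ _⟩
  obtain ⟨i₀, -, hi₀⟩ := Finset.exists_min_image Finset.univ ν huniv
  obtain ⟨j₀, -, hj₀⟩ := Finset.exists_max_image Finset.univ ρ huniv
  set νm := ν i₀ with hνmdef
  set ρM := ρ j₀ with hρMdef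
  have hνm0 : 0 < νm := (hν i₀).1
  have hνm1 : νm < 1 := (hν i₀).2
  have hρM0 : 0 < ρM := (hρ j₀).1
  have hρM1 : ρM < 1 := (hρ j₀).2
  have hν' : ∀ i x y, νm * dist x y ≤ dist (f i x) (f i y) := fun i x y =>
    le_trans (mul_le_mul_of_nonneg_right (hi₀ i (Finset.mem_univ i)) dist_nonneg) (hbl i x y).1
  have hρ' : ∀ i x y, dist (f i x) (f i y) ≤ ρM * dist x y := fun i x y =>
    le_trans (hbl i x y).2 (mul_le_mul_of_nonneg_right (hj₀ i (Finset.mem_univ i)) dist_nonneg)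
  have hcont : ∀ i, Continuous (f i) := by
    intro i
    have hl : LipschitzWith ⟨ρM, hρM0.le⟩ (f i) :=
      LipschitzWith.of_dist_le_mul (fun x y => by exact hρ' i x y)
    exact hl.continuous
  have hsub : ∀ i, f i '' F ⊆ F := by
    intro i x hx
    show x ∈ F
    rw [hinv]
    exact Set.mem_iUnion.mpr ⟨i, hx⟩
  -- separation constant
  have hpair : ∀ q : Fin m × Fin m, ∃ d : ℝ, 0 < d ∧
      (q.1 ≠ q.2 → ∀ x ∈ f q.1 '' F, ∀ y ∈ f q.2 '' F, d ≤ dist x y) := by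
    rintro ⟨i, j⟩
    by_cases hij : i = j
    · exact ⟨1, one_pos, fun hcon => absurd hij hcon⟩
    · have hKc : IsCompact (f i '' F) := hFc.image (hcont i)
      have hLc : IsCompact (f j '' F) := hFc.image (hcont j)
      obtain ⟨d, hd0, hdisj⟩ := (hssc i j hij).exists_thickenings hKc hLc.isClosed
      refine ⟨d, hd0, fun _ x hx y hy => ?_⟩
      by_contra hlt
      push_neg at hlt
      have hy1 : y ∈ Metric.thickening d (f i '' F) :=
        Metric.mem_thickening_iff.mpr ⟨x, hx, by rwa [dist_comm]⟩
      have hy2 : y ∈ Metric.thickening d (f j '' F) :=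
        Metric.self_subset_thickening hd0 _ hy
      exact Set.disjoint_left.mp hdisj hy1 hy2
  choose dfun hdfun0 hdfungap using hpair
  obtain ⟨q₀, -, hq₀⟩ := Finset.exists_min_image Finset.univ dfun
    ⟨(⟨0, hm⟩, ⟨0, hm⟩), Finset.mem_univ _⟩
  set δ' := dfun q₀ with hδ'def
  have hδ'0 : 0 < δ' := hdfun0 q₀
  have hδgap : ∀ i j, i ≠ j → ∀ x ∈ f i '' F, ∀ y ∈ f j '' F, δ' ≤ dist x y := by
    intro i j hij x hx y hy
    exact le_trans (hq₀ (i, j) (Finset.mem_univ _)) (hdfungap (i, j) hij x hx y hy)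
  -- diameter
  set D := Metric.diam F with hDdef
  have hD0 : 0 ≤ D := Metric.diam_nonneg
  have hD : ∀ x ∈ F, ∀ y ∈ F, dist x y ≤ D := fun x hx y hy =>
    Metric.dist_le_diam_of_mem hFc.isBounded hx hy
  -- the exponent threshold
  have hlogν : Real.log νm < 0 := Real.log_neg hνm0 hνm1
  have hlogρ : Real.log ρM < 0 := Real.log_neg hρM0 hρM1
  have hquot : 0 < Real.log ρM / Real.log νm := div_pos_iff.mpr (Or.inr ⟨hlogρ, hlogν⟩)
  refine ⟨min (Real.log ρM / Real.log νm) 1, lt_min hquot one_pos, ?_⟩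
  intro α hα0 hαlt
  have hα1 : α < 1 := lt_of_lt_of_le hαlt (min_le_right _ _)
  have hgeom : ρM < νm ^ α := by
    have h1 : α < Real.log ρM / Real.log νm := lt_of_lt_of_le hαlt (min_le_left _ _)
    have h2 : Real.log ρM < α * Real.log νm := (lt_div_iff_of_neg hlogν).mp h1
    calc ρM = Real.exp (Real.log ρM) := (Real.exp_log hρM0).symm
      _ < Real.exp (α * Real.log νm) := Real.exp_lt_exp.mpr h2
      _ = νm ^ α := by rw [Real.rpow_def_of_pos hνm0, mul_comm]
  -- function space instances
  haveI hcs : CompactSpace ↥F := isCompact_iff_compactSpace.mp hFc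
  haveI : CompleteSpace ↥(HolderBall α F) := (Stmt11.isClosed_holderBall α F).completeSpace_coe
  haveI : Nonempty ↥(HolderBall α F) := ⟨⟨0, Stmt11.zero_mem_holderBall α F⟩⟩
  -- the open dense sets
  set U : ℕ → Set ↥(HolderBall α F) := fun n =>
    {g | volume (Set.range
      ⇑((g : ↥(HolderBall α F)) : BoundedContinuousFunction ↥F ℝ)) < ((n : ENNReal))⁻¹}
    with hUdef
  have hUopen : ∀ n, IsOpen (U n) := by
    intro n
    rw [Metric.isOpen_iff]
    intro g₀ hg₀
    simp only [hUdef, Set.mem_setOf_eq] at hg₀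
    have hcomp : IsCompact (Set.range
        ⇑((g₀ : ↥(HolderBall α F)) : BoundedContinuousFunction ↥F ℝ)) :=
      isCompact_range ((g₀ : BoundedContinuousFunction ↥F ℝ)).continuous
    have hbdfin : volume (Metric.thickening 1 (Set.range
        ⇑((g₀ : ↥(HolderBall α F)) : BoundedContinuousFunction ↥F ℝ))) ≠ ⊤ :=
      (hcomp.isBounded.thickening.measure_lt_top).ne
    have htend := tendsto_measure_thickening_of_isClosed
      ⟨1, one_pos, hbdfin⟩ hcomp.isClosed
    have hev := htend.eventually_lt_const hg₀
    obtain ⟨r, hrlt, hr0⟩ := (hev.and self_mem_nhdsWithin).exists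
    refine ⟨r, hr0, ?_⟩
    intro g hgball
    rw [Metric.mem_ball] at hgball
    show volume (Set.range
      ⇑((g : ↥(HolderBall α F)) : BoundedContinuousFunction ↥F ℝ)) < ((n : ENNReal))⁻¹
    refine lt_of_le_of_lt (measure_mono ?_) hrlt
    rintro _ ⟨x, rfl⟩
    rw [Metric.mem_thickening_iff]
    refine ⟨((g₀ : ↥(HolderBall α F)) : BoundedContinuousFunction ↥F ℝ) x, ⟨x, rfl⟩, ?_⟩
    calc dist (((g : ↥(HolderBall α F)) : BoundedContinuousFunction ↥F ℝ) x)
          (((g₀ : ↥(HolderBall α F)) : BoundedContinuousFunction ↥F ℝ) x)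
        ≤ dist ((g : ↥(HolderBall α F)) : BoundedContinuousFunction ↥F ℝ)
          ((g₀ : ↥(HolderBall α F)) : BoundedContinuousFunction ↥F ℝ) :=
        BoundedContinuousFunction.dist_coe_le_dist x
      _ < r := by rwa [← Subtype.dist_eq]
  have hUdense : ∀ n, Dense (U n) := by
    intro n
    rw [Metric.dense_iff]
    intro g₀ r hr
    obtain ⟨g, hgmem, hgfin, hgdist⟩ := Stmt11.density hm f F hFne hFc hsub hinv
      hνm0 hνm1.le hρM0.le hρM1 hν' hρ' hδ'0 hδgap hD0 hD hα0 hα1 hgeom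
      (↑g₀) g₀.2 hr
    refine ⟨⟨g, hgmem⟩, ?_, ?_⟩
    · rw [Metric.mem_ball, Subtype.dist_eq]
      exact hgdist
    · show volume (Set.range
        ⇑(((⟨g, hgmem⟩ : ↥(HolderBall α F)) : ↥(HolderBall α F))
          : BoundedContinuousFunction ↥F ℝ)) < ((n : ENNReal))⁻¹
      rw [hgfin.measure_zero]
      exact ENNReal.inv_pos.mpr (ENNReal.natCast_ne_top n)
  set G : Set ↥(HolderBall α F) := ⋂ n, U n with hGdef
  have hGdense : Dense G := dense_iInter_of_isOpen hUopen hUdense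
  have hGgδ : IsGδ G := IsGδ.iInter_of_isOpen hUopen
  have hGnull : ∀ g ∈ G, volume (Set.range
      ⇑((g : ↥(HolderBall α F)) : BoundedContinuousFunction ↥F ℝ)) = 0 := by
    intro g hg
    by_contra hne
    obtain ⟨n, hn⟩ := ENNReal.exists_inv_nat_lt hne
    have hmem := Set.mem_iInter.mp hg n
    simp only [hUdef, Set.mem_setOf_eq] at hmem
    exact lt_irrefl _ (hmem.trans hn)
  refine ⟨⟨G, hGdense, hGgδ, hGnull⟩, ?_⟩
  -- `DStar α F = 0`
  have hInf0 : ∀ G' : Set ↥(HolderBall α F), Dense G' → IsGδ G' →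
      sInf ((fun g : ↥(HolderBall α F) =>
        DstarF F ⇑(g : BoundedContinuousFunction ↥F ℝ)) '' G') = 0 := by
    intro G' hd' hgδ'
    have hGG' : (G' ∩ G).Nonempty := (Dense.inter_of_Gδ hgδ' hGgδ hd' hGdense).nonempty
    obtain ⟨f₀, hf₀', hf₀G⟩ := hGG'
    have hbdd : ∀ y ∈ (fun g : ↥(HolderBall α F) =>
        DstarF F ⇑(g : BoundedContinuousFunction ↥F ℝ)) '' G', 0 ≤ y := by
      rintro y ⟨g, -, rfl⟩
      exact Stmt11.dstarF_nonneg F _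
    apply le_antisymm
    · have hle := csInf_le ⟨0, hbdd⟩ (Set.mem_image_of_mem _ hf₀')
      rwa [Stmt11.dstarF_eq_zero F _ (hGnull f₀ hf₀G)] at hle
    · exact Real.sInf_nonneg hbdd
  have hset : {d : ℝ | ∃ G' : Set ↥(HolderBall α F), Dense G' ∧ IsGδ G' ∧
      d = sInf ((fun g : ↥(HolderBall α F) =>
        DstarF F ⇑(g : BoundedContinuousFunction ↥F ℝ)) '' G')} = {0} := by
    ext d
    simp only [Set.mem_setOf_eq, Set.mem_singleton_iff]
    constructor
    · rintro ⟨G', h1, h2, rfl⟩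
      exact hInf0 G' h1 h2
    · rintro rfl
      exact ⟨G, hGdense, hGgδ, (hInf0 G hGdense hGgδ).symm⟩
  rw [DStar, hset]
  exact csSup_singleton 0


end
end

section
/- Let C ⊆ [0,1] be the fat Cantor set with level-n interval length l_n = 1/(2^{n+1} − 1), and for each k ≥ 1 let I_k be a maximal (closed) subinterval of the stage-k set C_k. Then for every 1/2 < α ≤ 1, the ratio Λ^α(I_k \ C)/|I_k| tends to 0 as k → ∞, where Λ^α denotes α-dimensional Hausdorff capacity. -/
open scoped ENNReal

noncomputable section

/-- `l_n = 1/(2^{n+1} − 1)`, the common length of the `2^n` maximal closed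
subintervals of the stage-`n` set `C_n` of the fat Cantor set construction. -/
def lCant (n : ℕ) : ℝ := 1 / (2 ^ (n + 1) - 1)

/-- Auxiliary recursion computing the left endpoint of the level-`n` interval
indexed by a binary word (`false` = left child, `true` = right child); the first
argument is the current depth, the second the current left endpoint. -/
def leftEndAux : ℕ → ℝ → List Bool → ℝ
  | _, a, [] => a
  | n, a, b :: w => leftEndAux (n + 1) (if b then a + lCant n - lCant (n + 1) else a) w

/-- The left endpoint of the interval of the fat Cantor set construction indexed by
the binary word `w` (an interval of level `w.length`). -/
def leftEnd (w : List Bool) : ℝ := leftEndAux 0 0 w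

/-- The stage-`n` set `C_n`: the union of the `2^n` closed intervals of length
`l_n`; `C_n` arises from `C_{n−1}` by removing an open interval from the middle of
each maximal subinterval. -/
def cantorStage (n : ℕ) : Set ℝ :=
  ⋃ (w : List Bool) (_ : w.length = n), Set.Icc (leftEnd w) (leftEnd w + lCant n)

/-- The fat Cantor set `C = ⋂ₙ C_n` (of Lebesgue measure 1/2). -/
def fatC : Set ℝ := ⋂ n : ℕ, cantorStage n

/-- The `α`-dimensional Hausdorff capacity (Hausdorff content) of `E ⊆ ℝ`. -/
def hContent (α : ℝ) (E : Set ℝ) : ℝ≥0∞ :=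
  ⨅ (U : ℕ → Set ℝ) (_ : E ⊆ ⋃ i, U i), ∑' i, EMetric.diam (U i) ^ α

/-! ### Auxiliary lemmas -/

/-- The middle gap of the level-`|w|` interval of word `w`. -/
def gapI (w : List Bool) : Set ℝ :=
  Set.Icc (leftEnd w + lCant (w.length+1)) (leftEnd w + lCant w.length - lCant (w.length+1))

lemma two_pow_sub_pos (n : ℕ) : (1:ℝ) ≤ 2 ^ (n+1) - 1 := by
  have : (2:ℝ) ≤ 2 ^ (n+1) := by
    calc (2:ℝ) = 2^1 := by norm_num
    _ ≤ 2 ^ (n+1) := by apply pow_le_pow_right₀ (by norm_num) (by omega)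
  linarith

lemma lCant_pos (n : ℕ) : 0 < lCant n := by
  have := two_pow_sub_pos n
  unfold lCant; positivity

lemma lCant_gap (n : ℕ) : 2 * lCant (n+1) < lCant n := by
  have h1 := two_pow_sub_pos n
  have h2 := two_pow_sub_pos (n+1)
  have hp : (2:ℝ)^(n+1+1) = 2^(n+1) * 2 := pow_succ 2 (n+1)
  unfold lCant
  rw [mul_one_div, div_lt_div_iff₀ (by linarith) (by linarith)]
  nlinarith

lemma gapLen_le (n : ℕ) : lCant n - 2 * lCant (n+1) ≤ (1/4:ℝ)^n := by
  have hx : (1:ℝ) ≤ 2^n := one_le_pow₀ (by norm_num)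
  have h1 : (2:ℝ)^(n+1) = 2^n * 2 := pow_succ 2 n
  have h2 : (2:ℝ)^(n+1+1) = 2^n * 2 * 2 := by rw [pow_succ, h1]
  set x := (2:ℝ)^n with hxd
  have ha : (0:ℝ) < x*2 - 1 := by nlinarith
  have hb : (0:ℝ) < x*2*2 - 1 := by nlinarith
  have e : lCant n - 2 * lCant (n+1) = 1/((x*2-1)*(x*2*2-1)) := by
    unfold lCant; rw [h1, h2]; rw [mul_one_div, div_sub_div _ _ ha.ne' hb.ne']; congr 1; ring
  have e2 : (1/4:ℝ)^n = 1/(x^2) := by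
    rw [div_pow, one_pow, hxd, show (4:ℝ) = 2^2 by norm_num, ← pow_mul, ← pow_mul, mul_comm 2 n]
  rw [e, e2]
  apply one_div_le_one_div_of_le (by positivity)
  nlinarith

lemma leftEndAux_append (u v : List Bool) : ∀ (n : ℕ) (a : ℝ),
    leftEndAux n a (u ++ v) = leftEndAux (n + u.length) (leftEndAux n a u) v := by
  induction u with
  | nil => intro n a; simp [leftEndAux]
  | cons b w ih =>
    intro n a
    have h1 : leftEndAux n a ((b::w) ++ v)
        = leftEndAux (n+1) (if b then a + lCant n - lCant (n+1) else a) (w ++ v) := rfl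
    rw [h1, ih]
    congr 1
    · simp [List.length_cons]; omega

lemma leftEnd_append_false (w : List Bool) : leftEnd (w ++ [false]) = leftEnd w := by
  rw [leftEnd, leftEndAux_append]; simp [leftEndAux]; rfl

lemma leftEnd_append_true (w : List Bool) :
    leftEnd (w ++ [true]) = leftEnd w + lCant w.length - lCant (w.length+1) := by
  rw [leftEnd, leftEndAux_append]; simp [leftEndAux]; rfl

lemma mem_cantorStage {x : ℝ} {w : List Bool}
    (hx : x ∈ Set.Icc (leftEnd w) (leftEnd w + lCant w.length)) :
    x ∈ cantorStage w.length :=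
  Set.mem_iUnion₂.2 ⟨w, rfl, hx⟩

lemma cover_aux : ∀ (m : ℕ) (w : List Bool),
    Set.Icc (leftEnd w) (leftEnd w + lCant w.length)
      ⊆ (⋃ u : List Bool, gapI (w ++ u)) ∪ cantorStage (w.length + m) := by
  intro m
  induction m with
  | zero => intro w x hx; exact Or.inr (mem_cantorStage hx)
  | succ m ih =>
    intro w x hx
    set n := w.length with hn
    obtain ⟨hx1, hx2⟩ := hx
    by_cases hmid : leftEnd w + lCant (n+1) ≤ x ∧ x ≤ leftEnd w + lCant n - lCant (n+1)
    · left
      exact Set.mem_iUnion.2 ⟨[], by rw [List.append_nil]; exact hmid⟩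
    · push_neg at hmid
      rcases le_or_gt x (leftEnd w + lCant n - lCant (n+1)) with hr | hr
      · -- left child
        have hxl : x ≤ leftEnd w + lCant (n+1) := by
          rcases lt_or_ge x (leftEnd w + lCant (n+1)) with h | h
          · exact h.le
          · exact absurd (hmid h) (not_lt.2 hr)
        have hmem : x ∈ Set.Icc (leftEnd (w ++ [false]))
            (leftEnd (w ++ [false]) + lCant (w ++ [false]).length) := by
          rw [leftEnd_append_false]
          constructor
          · exact hx1
          · simpa [List.length_append, hn] using hxl
        rcases ih (w ++ [false]) hmem with h | h
        · left
          obtain ⟨u, hu⟩ := Set.mem_iUnion.1 h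
          exact Set.mem_iUnion.2 ⟨false :: u, by rwa [← List.singleton_append, ← List.append_assoc]⟩
        · right
          have : (w ++ [false]).length + m = n + (m+1) := by simp [hn]; omega
          rwa [this] at h
      · -- right child
        have hmem : x ∈ Set.Icc (leftEnd (w ++ [true]))
            (leftEnd (w ++ [true]) + lCant (w ++ [true]).length) := by
          rw [leftEnd_append_true]
          have hl : (w ++ [true]).length = n + 1 := by simp [hn]
          rw [hl]
          exact ⟨hr.le, by linarith⟩
        rcases ih (w ++ [true]) hmem with h | h
        · left
          obtain ⟨u, hu⟩ := Set.mem_iUnion.1 h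
          exact Set.mem_iUnion.2 ⟨true :: u, by rwa [← List.singleton_append, ← List.append_assoc]⟩
        · right
          have : (w ++ [true]).length + m = n + (m+1) := by simp [hn]; omega
          rwa [this] at h

lemma cantorStage_succ_subset (n : ℕ) : cantorStage (n+1) ⊆ cantorStage n := by
  intro x hx
  obtain ⟨w', hw', hmem⟩ := Set.mem_iUnion₂.1 hx
  rcases List.eq_nil_or_concat w' with rfl | ⟨w, b, rfl⟩
  · simp at hw'
  · have hwn : w.length = n := by
      have := hw'; simp [List.concat_eq_append] at this; omega
    have hgap := lCant_gap n
    have hpos := lCant_pos (n+1)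
    apply Set.mem_iUnion₂.2
    refine ⟨w, hwn, ?_⟩
    cases b
    · rw [List.concat_eq_append, leftEnd_append_false] at hmem
      obtain ⟨h1, h2⟩ := hmem
      exact ⟨h1, by rw [hwn] at *; linarith⟩
    · rw [List.concat_eq_append, leftEnd_append_true, hwn] at hmem
      obtain ⟨h1, h2⟩ := hmem
      exact ⟨by linarith, by linarith⟩

lemma cantorStage_anti : ∀ {m n : ℕ}, m ≤ n → cantorStage n ⊆ cantorStage m := by
  intro m n h
  induction n with
  | zero => simp_all
  | succ n ih =>
    rcases Nat.lt_or_ge m (n+1) with h' | h'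
    · exact (cantorStage_succ_subset n).trans (ih (by omega))
    · have : m = n+1 := by omega
      subst this; exact subset_rfl

instance listBoolDenum : Denumerable (List Bool) := Denumerable.ofEncodableOfInfinite _

instance fiberFintype (n : ℕ) : Fintype {u : List Bool // u.length = n} :=
  inferInstanceAs (Fintype (List.Vector Bool n))

lemma fiber_card (n : ℕ) : Fintype.card {u : List Bool // u.length = n} = 2^n := by
  have := card_vector (α := Bool) n
  exact this

lemma diff_subset_gaps {k : ℕ} {w : List Bool} (hw : w.length = k) :
    Set.Icc (leftEnd w) (leftEnd w + lCant k) \ fatC ⊆ ⋃ u : List Bool, gapI (w ++ u) := by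
  intro x ⟨hx, hxc⟩
  rw [fatC, Set.mem_iInter] at hxc
  push_neg at hxc
  obtain ⟨m, hm⟩ := hxc
  have hx' : x ∈ Set.Icc (leftEnd w) (leftEnd w + lCant w.length) := by rwa [hw]
  rcases cover_aux (k + m) w hx' with h | h
  · exact h
  · exact absurd (cantorStage_anti (by omega) h) hm

lemma ediam_gapI (v : List Bool) :
    EMetric.diam (gapI v) = ENNReal.ofReal (lCant v.length - 2 * lCant (v.length + 1)) := by
  rw [gapI, EMetric.diam, Real.ediam_Icc]
  ring_nf

lemma tsum_length (f : ℕ → ℝ≥0∞) :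
    ∑' u : List Bool, f u.length = ∑' n : ℕ, (2:ℝ≥0∞)^n * f n := by
  rw [← Equiv.tsum_eq (Equiv.sigmaFiberEquiv (List.length : List Bool → ℕ))
    (fun u => f u.length)]
  rw [ENNReal.tsum_sigma']
  congr 1
  funext n
  have : ∀ x : {u : List Bool // u.length = n},
      f ((Equiv.sigmaFiberEquiv (List.length : List Bool → ℕ)) ⟨n, x⟩).length = f n := by
    rintro ⟨u, hu⟩; simp [Equiv.sigmaFiberEquiv, hu]
  calc (∑' x : {u : List Bool // u.length = n},
        f ((Equiv.sigmaFiberEquiv (List.length : List Bool → ℕ)) ⟨n, x⟩).length)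
      = ∑' _ : {u : List Bool // u.length = n}, f n := by
        congr 1; funext x; exact this x
    _ = (Fintype.card {u : List Bool // u.length = n} : ℝ≥0∞) * f n := by
        rw [tsum_fintype, Finset.sum_const, Finset.card_univ, nsmul_eq_mul]
    _ = (2:ℝ≥0∞)^n * f n := by rw [fiber_card]; push_cast; ring_nf

lemma hContent_le_B (α : ℝ) (hα0 : 0 ≤ α) (k : ℕ) (w : List Bool) (hw : w.length = k) :
    hContent α (Set.Icc (leftEnd w) (leftEnd w + lCant k) \ fatC)
      ≤ ∑' n : ℕ, (2:ℝ≥0∞)^n * (ENNReal.ofReal ((1/4:ℝ)^α))^(k+n) := by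
  set e := Denumerable.eqv (List Bool)
  set U : ℕ → Set ℝ := fun i => gapI (w ++ e.symm i) with hU
  have hcov : Set.Icc (leftEnd w) (leftEnd w + lCant k) \ fatC ⊆ ⋃ i, U i := by
    refine (diff_subset_gaps hw).trans ?_
    intro x hx
    obtain ⟨u, hu⟩ := Set.mem_iUnion.1 hx
    exact Set.mem_iUnion.2 ⟨e u, by simpa [hU] using hu⟩
  refine le_trans (iInf_le_of_le U (iInf_le _ hcov)) ?_
  have step1 : ∑' i, EMetric.diam (U i) ^ α
      = ∑' u : List Bool, EMetric.diam (gapI (w ++ u)) ^ α :=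
    Equiv.tsum_eq e.symm (fun u => EMetric.diam (gapI (w ++ u)) ^ α)
  rw [step1, ← tsum_length (fun n => (ENNReal.ofReal ((1/4:ℝ)^α))^(k+n))]
  apply ENNReal.tsum_le_tsum
  intro u
  have hlen : (w ++ u).length = k + u.length := by simp [hw]
  rw [ediam_gapI, hlen]
  set n := u.length
  have h1 : lCant (k+n) - 2 * lCant (k+n+1) ≤ (1/4:ℝ)^(k+n) := gapLen_le (k+n)
  calc ENNReal.ofReal (lCant (k+n) - 2 * lCant (k+n+1)) ^ α
      ≤ ENNReal.ofReal ((1/4:ℝ)^(k+n)) ^ α :=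
        ENNReal.rpow_le_rpow (ENNReal.ofReal_le_ofReal h1) hα0
    _ = ENNReal.ofReal (((1/4:ℝ)^(k+n) : ℝ) ^ α) := ENNReal.ofReal_rpow_of_pos (by positivity)
    _ = ENNReal.ofReal ((((1/4:ℝ)^α))^(k+n)) := by
        rw [← Real.rpow_natCast (1/4 : ℝ) (k+n), ← Real.rpow_mul (by norm_num),
          mul_comm, Real.rpow_mul (by norm_num), Real.rpow_natCast]
    _ = (ENNReal.ofReal ((1/4:ℝ)^α))^(k+n) := ENNReal.ofReal_pow (by positivity) _

/-- For the fat Cantor set `C` with `l_n = 1/(2^{n+1} − 1)`: if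
`I k` is a maximal closed subinterval of the stage-`k` set `C_k` for each `k`, then
for every `1/2 < α ≤ 1` the ratio `Λ^α(I_k \ C) / |I_k|` tends to `0` as `k → ∞`. -/
theorem stmt13 (α : ℝ) (hα1 : 1 / 2 < α) (hα2 : α ≤ 1)
    (I : ℕ → Set ℝ)
    (hI : ∀ k, ∃ w : List Bool, w.length = k ∧
      I k = Set.Icc (leftEnd w) (leftEnd w + lCant k)) :
    Filter.Tendsto (fun k => (hContent α (I k \ fatC)).toReal / lCant k)
      Filter.atTop (nhds 0) := by
  have hα0 : (0:ℝ) ≤ α := by linarith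
  set t : ℝ := (1/4:ℝ)^α with ht
  have ht0 : 0 ≤ t := Real.rpow_nonneg (by norm_num) α
  have hhalf : (1/4:ℝ)^((1:ℝ)/2) = 1/2 := by
    rw [show (1/4:ℝ) = (1/2)^(2:ℕ) by norm_num, ← Real.rpow_natCast ((1/2:ℝ)) 2,
      ← Real.rpow_mul (by norm_num)]
    norm_num
  have htlt : t < 1/2 := by
    calc t < (1/4:ℝ)^((1:ℝ)/2) :=
          Real.rpow_lt_rpow_of_exponent_gt (by norm_num) (by norm_num) (by linarith)
      _ = 1/2 := hhalf
  have hρ : 2*t < 1 := by linarith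
  set r : ℝ≥0∞ := ENNReal.ofReal t with hr
  have h2r : 2*r = ENNReal.ofReal (2*t) := by
    rw [ENNReal.ofReal_mul (by norm_num), ENNReal.ofReal_ofNat]
  have h2rlt : 2*r < 1 := by rw [h2r]; exact ENNReal.ofReal_lt_one.2 hρ
  have hsub : (1:ℝ≥0∞) - 2*r ≠ 0 := by
    have : 0 < (1:ℝ≥0∞) - 2*r := tsub_pos_of_lt h2rlt
    exact this.ne'
  set K : ℝ := ((1:ℝ≥0∞) - 2*r)⁻¹.toReal with hK
  have hK0 : 0 ≤ K := ENNReal.toReal_nonneg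
  have hBeval : ∀ k, ∑' n : ℕ, (2:ℝ≥0∞)^n * r^(k+n) = r^k * ((1:ℝ≥0∞) - 2*r)⁻¹ := by
    intro k
    have : ∀ n : ℕ, (2:ℝ≥0∞)^n * r^(k+n) = r^k * (2*r)^n := by
      intro n; rw [pow_add, mul_pow]; ring
    rw [tsum_congr this, ENNReal.tsum_mul_left, ENNReal.tsum_geometric]
  have hBne : ∀ k, r^k * ((1:ℝ≥0∞) - 2*r)⁻¹ ≠ ⊤ :=
    fun k => ENNReal.mul_ne_top (ENNReal.pow_ne_top ENNReal.ofReal_ne_top)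
      (ENNReal.inv_ne_top.2 hsub)
  have hBtoReal : ∀ k, (r^k * ((1:ℝ≥0∞) - 2*r)⁻¹).toReal = t^k * K := by
    intro k
    rw [ENNReal.toReal_mul, ENNReal.toReal_pow, hr, ENNReal.toReal_ofReal ht0]
  have hbound : ∀ k, (hContent α (I k \ fatC)).toReal / lCant k ≤ (2*K) * (2*t)^k := by
    intro k
    obtain ⟨w, hw, hIk⟩ := hI k
    have hle := hContent_le_B α hα0 k w hw
    rw [hBeval k] at hle
    have h1 : (hContent α (I k \ fatC)).toReal ≤ t^k * K := by
      rw [hIk, ← hBtoReal k]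
      exact ENNReal.toReal_mono (hBne k) hle
    have hD : (1:ℝ) ≤ 2^(k+1) - 1 := two_pow_sub_pos k
    have hpos := lCant_pos k
    calc (hContent α (I k \ fatC)).toReal / lCant k
        ≤ (t^k * K) / lCant k := div_le_div_of_nonneg_right h1 hpos.le
      _ = (t^k * K) * (2^(k+1) - 1) := by
          rw [lCant]; field_simp
      _ ≤ (t^k * K) * 2^(k+1) := by
          apply mul_le_mul_of_nonneg_left (by linarith) (by positivity)
      _ = (2*K) * (2*t)^k := by rw [mul_pow, pow_succ]; ring
  have hlim : Filter.Tendsto (fun k : ℕ => (2*K) * (2*t)^k) Filter.atTop (nhds 0) := by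
    have := (tendsto_pow_atTop_nhds_zero_of_lt_one (by linarith) hρ).const_mul (2*K)
    simpa using this
  exact squeeze_zero (fun k => div_nonneg ENNReal.toReal_nonneg (lCant_pos k).le) hbound hlim

end
end
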